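/- arXiv:0707.0845 — 7 statements merged into one kernel-verified Lean document; each statement's English description precedes it below -/
import Mathlib

section
/- If B ∈ GL_n(ℝ) acts on ℝⁿ linearly and on (ℝ_{>0})ⁿ by the conjugated map B̄ = Exp ∘ B ∘ Log (componentwise exponential and logarithm), then for any V ⊆ (ℝ_{>0})ⁿ one has B(A₀(V)) = A₀(B̄(V)). -/
open Filter Topology

/-- The logarithmic limit set of `V ⊆ (ℝ_{>0})ⁿ`, via the sequence characterization. -/
def logLimit {n : ℕ} (V : Set (Fin n → ℝ)) : Set (Fin n → ℝ) :=
  {y | ∃ (x : ℕ → Fin n → ℝ) (t : ℕ → ℝ),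
    (∀ k, x k ∈ V) ∧ (∀ k, t k ∈ Set.Ioo (0 : ℝ) 1) ∧
    Tendsto t atTop (𝓝 0) ∧
    Tendsto (fun k => fun i => (-1 / Real.log (t k)) * Real.log (x k i)) atTop (𝓝 y)}

lemma mulVec_continuous {n : ℕ} (B : Matrix (Fin n) (Fin n) ℝ) :
    Continuous fun v : Fin n → ℝ => B.mulVec v :=
  LinearMap.continuous_of_finiteDimensional (Matrix.mulVecLin B)

lemma key_eq {n : ℕ} (B : Matrix (Fin n) (Fin n) ℝ) (c : ℝ) (x : Fin n → ℝ) :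
    (fun i => c * Real.log (Real.exp (∑ j, B i j * Real.log (x j)))) =
      B.mulVec (fun i => c * Real.log (x i)) := by
  funext i
  simp only [Real.log_exp, Matrix.mulVec, dotProduct, Finset.mul_sum]
  congr 1; funext j; ring

/-- for B in GL_n(ℝ), with the conjugated action Bbar = Exp ∘ B ∘ Log on
the positive orthant, one has B(A₀(V)) = A₀(Bbar(V)). -/
theorem stmt6 {n : ℕ} (B : Matrix (Fin n) (Fin n) ℝ) (hB : IsUnit B.det)
    (V : Set (Fin n → ℝ)) (hV : ∀ x ∈ V, ∀ i, 0 < x i) :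
    (fun y : Fin n → ℝ => B.mulVec y) '' logLimit V =
      logLimit ((fun x : Fin n → ℝ =>
        fun i => Real.exp (∑ j, B i j * Real.log (x j))) '' V) := by
  have hinv : ∀ v : Fin n → ℝ, B.mulVec (B⁻¹.mulVec v) = v := by
    intro v
    rw [Matrix.mulVec_mulVec, Matrix.mul_nonsing_inv B hB, Matrix.one_mulVec]
  have hinv' : ∀ v : Fin n → ℝ, B⁻¹.mulVec (B.mulVec v) = v := by
    intro v
    rw [Matrix.mulVec_mulVec, Matrix.nonsing_inv_mul B hB, Matrix.one_mulVec]
  ext y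
  constructor
  · rintro ⟨z, ⟨x, t, hx, ht, ht0, hlim⟩, rfl⟩
    refine ⟨fun k => fun i => Real.exp (∑ j, B i j * Real.log (x k j)), t,
      fun k => ⟨x k, hx k, rfl⟩, ht, ht0, ?_⟩
    have : (fun k => fun i => (-1 / Real.log (t k)) *
        Real.log (Real.exp (∑ j, B i j * Real.log (x k j)))) =
        fun k => B.mulVec (fun i => (-1 / Real.log (t k)) * Real.log (x k i)) := by
      funext k; exact key_eq B _ _
    rw [this]
    exact ((mulVec_continuous B).tendsto _).comp hlim
  · rintro ⟨x', t, hx', ht, ht0, hlim⟩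
    choose x hx hxe using hx'
    refine ⟨B⁻¹.mulVec y, ⟨x, t, hx, ht, ht0, ?_⟩, hinv y⟩
    have : (fun k => fun i => (-1 / Real.log (t k)) * Real.log (x k i)) =
        fun k => B⁻¹.mulVec (fun i => (-1 / Real.log (t k)) * Real.log (x' k i)) := by
      funext k
      have h1 : (fun i => (-1 / Real.log (t k)) * Real.log (x' k i)) =
          B.mulVec (fun i => (-1 / Real.log (t k)) * Real.log (x k i)) := by
        rw [← key_eq B]
        funext i
        rw [← hxe k]
      rw [h1, hinv']
    rw [this]
    exact ((mulVec_continuous B⁻¹).tendsto _).comp hlim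
end

section
/- For V ⊆ (ℝ_{>0})ⁿ, the point (0,…,0,−1) belongs to A₀(V) if and only if there exists a sequence y(k) in V such that yₙ(k) → 0 and for every N ∈ ℕ there exists k₀ such that for all k > k₀ and all i ∈ {1,…,n−1}: yₙ(k) < (y_i(k))^N and yₙ(k) < (y_i(k))^{−N}. -/
open Filter Topology

/-- the point (0,…,0,−1) lies in A₀(V) iff V contains a sequence whose last
coordinate tends to 0 and is eventually smaller than every fixed positive or negative
power of each of the other coordinates. -/
theorem stmt7 {n : ℕ} (V : Set (Fin (n + 1) → ℝ)) (hV : ∀ x ∈ V, ∀ i, 0 < x i) :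
    (fun i : Fin (n + 1) => if i = Fin.last n then (-1 : ℝ) else 0) ∈ logLimit V ↔
      ∃ y : ℕ → Fin (n + 1) → ℝ, (∀ k, y k ∈ V) ∧
        Tendsto (fun k => y k (Fin.last n)) atTop (𝓝 0) ∧
        ∀ N : ℕ, ∃ k₀, ∀ k > k₀, ∀ i : Fin (n + 1), i ≠ Fin.last n →
          y k (Fin.last n) < (y k i) ^ (N : ℝ) ∧
          y k (Fin.last n) < (y k i) ^ (-(N : ℝ)) := by
  constructor
  · rintro ⟨x, t, hxV, ht01, ht0, hconv⟩
    have hxpos : ∀ k i, 0 < x k i := fun k i => hV _ (hxV k) i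
    set L : ℕ → ℝ := fun k => Real.log (t k) with hLdef
    have hLneg : ∀ k, L k < 0 := fun k => Real.log_neg (ht01 k).1 (ht01 k).2
    have hLne : ∀ k, L k ≠ 0 := fun k => (hLneg k).ne
    set u : ℕ → Fin (n + 1) → ℝ := fun k i => (-1 / L k) * Real.log (x k i) with hudef
    have hu : ∀ i, Tendsto (fun k => u k i) atTop
        (𝓝 (if i = Fin.last n then (-1 : ℝ) else 0)) :=
      fun i => tendsto_pi_nhds.mp hconv i
    have hulaw : ∀ k i, u k i * (-(L k)) = Real.log (x k i) := by
      intro k i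
      have := hLne k
      simp only [hudef]
      field_simp
    -- -L → atTop
    have hLtop : Tendsto (fun k => -(L k)) atTop atTop := by
      have h1 : Tendsto t atTop (𝓝[>] 0) :=
        tendsto_nhdsWithin_of_tendsto_nhds_of_eventually_within _ ht0
          (Eventually.of_forall fun k => (ht01 k).1)
      exact tendsto_neg_atBot_atTop.comp (Real.tendsto_log_nhdsGT_zero.comp h1)
    refine ⟨x, hxV, ?_, ?_⟩
    · -- last coordinate tends to 0
      have hul : Tendsto (fun k => u k (Fin.last n)) atTop (𝓝 (-1)) := by
        simpa using hu (Fin.last n)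
      have hlog : Tendsto (fun k => Real.log (x k (Fin.last n))) atTop atBot := by
        have := Filter.Tendsto.neg_mul_atTop (show (-1 : ℝ) < 0 by norm_num) hul hLtop
        exact this.congr fun k => hulaw k (Fin.last n)
      have := Real.tendsto_exp_atBot.comp hlog
      refine this.congr fun k => ?_
      exact Real.exp_log (hxpos k (Fin.last n))
    · intro N
      have hul : Tendsto (fun k => u k (Fin.last n)) atTop (𝓝 (-1)) := by
        simpa using hu (Fin.last n)
      set ε : ℝ := 1 / (2 * (N + 1)) with hεdef
      have hεpos : 0 < ε := by positivity
      have h1 : ∀ᶠ k in atTop, u k (Fin.last n) < -(1/2) :=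
        hul.eventually (Filter.Tendsto.eventually_lt_const (by norm_num) tendsto_id) |>.mono
          (fun k hk => hk)
      have h2 : ∀ᶠ k in atTop, ∀ i : Fin (n + 1), i ≠ Fin.last n →
          u k i ∈ Set.Ioo (-ε) ε := by
        rw [eventually_all]
        intro i
        by_cases hi : i = Fin.last n
        · exact Eventually.of_forall fun k h => absurd hi h
        · have hui : Tendsto (fun k => u k i) atTop (𝓝 0) := by simpa [hi] using hu i
          have : ∀ᶠ k in atTop, u k i ∈ Set.Ioo (-ε) ε :=
            hui (Ioo_mem_nhds (by linarith) hεpos)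
          exact this.mono fun k hk _ => hk
      obtain ⟨k₀, hk₀⟩ := eventually_atTop.mp (h1.and h2)
      refine ⟨k₀, fun k hk i hi => ?_⟩
      obtain ⟨hlast, hsmall⟩ := hk₀ k hk.le
      obtain ⟨hlo, hhi⟩ := hsmall i hi
      have hM : (0 : ℝ) ≤ (N : ℝ) := Nat.cast_nonneg N
      have hMε : (N : ℝ) * ε ≤ 1/2 := by
        rw [hεdef, mul_one_div, div_le_div_iff₀ (by positivity) (by norm_num : (0:ℝ) < 2)]
        nlinarith [Nat.cast_nonneg (α := ℝ) N]
      have key : ∀ c : ℝ, u k (Fin.last n) < c * u k i → x k (Fin.last n) < x k i ^ c := by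
        intro c hc
        have hs : 0 < -(L k) := by linarith [hLneg k]
        have := mul_lt_mul_of_pos_right hc hs
        rw [hulaw k (Fin.last n), mul_assoc, hulaw k i] at this
        rw [← Real.log_rpow (hxpos k i) c] at this
        exact (Real.log_lt_log_iff (hxpos k (Fin.last n))
          (Real.rpow_pos_of_pos (hxpos k i) c)).mp this
      constructor
      · refine key _ ?_
        nlinarith [mul_le_mul_of_nonneg_left hlo.le hM, mul_le_mul_of_nonneg_left hhi.le hM]
      · refine key _ ?_
        nlinarith [mul_le_mul_of_nonneg_left hlo.le hM, mul_le_mul_of_nonneg_left hhi.le hM]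
  · rintro ⟨y, hyV, hy0, hN⟩
    have hypos : ∀ k i, 0 < y k i := fun k i => hV _ (hyV k) i
    refine ⟨y, fun k => min (y k (Fin.last n)) (1/2), hyV, ?_, ?_, ?_⟩
    · intro k
      exact ⟨lt_min (hypos k (Fin.last n)) (by norm_num),
        lt_of_le_of_lt (min_le_right _ _) (by norm_num)⟩
    · have := hy0.min (tendsto_const_nhds (x := (1/2 : ℝ)))
      simpa using this
    · rw [tendsto_pi_nhds]
      intro i
      have hev : ∀ᶠ k in atTop, y k (Fin.last n) < 1/2 :=
        hy0 (Iio_mem_nhds (by norm_num))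
      by_cases hi : i = Fin.last n
      · subst hi
        rw [if_pos rfl]
        refine tendsto_const_nhds.congr' ?_
        filter_upwards [hev] with k hk
        have hmin : min (y k (Fin.last n)) (1/2) = y k (Fin.last n) := min_eq_left hk.le
        have hlogne : Real.log (y k (Fin.last n)) ≠ 0 :=
          (Real.log_neg (hypos k (Fin.last n)) (by linarith)).ne
        rw [hmin]
        field_simp
      · rw [if_neg hi]
        rw [NormedAddCommGroup.tendsto_nhds_zero]
        intro ε hε
        obtain ⟨N, hNgt⟩ := exists_nat_gt (1 / ε)
        have hNpos : (0 : ℝ) < N := lt_trans (by positivity) hNgt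
        have hNε : 1 / (N : ℝ) < ε := by
          rw [div_lt_iff₀ hNpos]
          rw [div_lt_iff₀ hε] at hNgt
          linarith
        obtain ⟨k₀, hk₀⟩ := hN N
        filter_upwards [hev, eventually_gt_atTop k₀] with k hk1 hk2
        obtain ⟨hlo, hhi⟩ := hk₀ k hk2 i hi
        have hmin : min (y k (Fin.last n)) (1/2) = y k (Fin.last n) := min_eq_left hk1.le
        set b := y k (Fin.last n) with hb
        set a := y k i with ha
        have hbpos : 0 < b := hypos k (Fin.last n)
        have hapos : 0 < a := hypos k i
        have hLneg : Real.log b < 0 := Real.log_neg hbpos (by linarith)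
        have h1 : Real.log b < (N : ℝ) * Real.log a := by
          have := Real.log_lt_log hbpos hlo
          rwa [Real.log_rpow hapos] at this
        have h2 : Real.log b < -(N : ℝ) * Real.log a := by
          have := Real.log_lt_log hbpos hhi
          rwa [Real.log_rpow hapos] at this
        have habs : (N : ℝ) * |Real.log a| < -Real.log b := by
          rcases abs_cases (Real.log a) with ⟨h, _⟩ | ⟨h, _⟩ <;> rw [h] <;> nlinarith
        rw [hmin, Real.norm_eq_abs, abs_mul, abs_div, abs_neg, abs_one,
          abs_of_neg hLneg]
        rw [div_mul_eq_mul_div, one_mul, div_lt_iff₀ (by linarith : (0:ℝ) < -Real.log b)]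
        have hεN : 1 < ε * N := (div_lt_iff₀ hNpos).mp hNε
        nlinarith [mul_lt_mul_of_pos_left habs hε,
          mul_nonneg (sub_nonneg.mpr hεN.le) (abs_nonneg (Real.log a))]
end

section
/- The converse of the previous implication fails: for V = {(x,y) ∈ (ℝ_{>0})² : y = e^{−1/x²}}, the point (0,−1) belongs to A₀(V), but there is no sequence in V converging to a point (a,0) with a > 0. -/
open Filter Topology

lemma aux_n_pos (k : ℕ) : (0:ℝ) < (k:ℝ) + 2 := by positivity

lemma aux_tendsto_n : Tendsto (fun k : ℕ => (k:ℝ) + 2) atTop atTop :=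
  tendsto_atTop_add_const_right _ _ tendsto_natCast_atTop_atTop

/-- for V = {(x, e^{-1/x²}) : x > 0}, the point (0,−1) lies in A₀(V) but no
sequence in V converges to a point (a, 0) with a > 0. -/
theorem stmt9 :
    (![(0 : ℝ), -1] ∈ logLimit
        {p : Fin 2 → ℝ | 0 < p 0 ∧ p 1 = Real.exp (-(1 / (p 0) ^ 2))}) ∧
    ¬ ∃ (x : ℕ → Fin 2 → ℝ) (a : ℝ), 0 < a ∧
        (∀ k, x k ∈ {p : Fin 2 → ℝ | 0 < p 0 ∧ p 1 = Real.exp (-(1 / (p 0) ^ 2))}) ∧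
        Tendsto x atTop (𝓝 ![a, 0]) := by
  constructor
  · -- witness sequence
    refine ⟨fun k => ![1 / Real.sqrt ((k:ℝ) + 2), Real.exp (-((k:ℝ) + 2))],
      fun k => Real.exp (-((k:ℝ) + 2)), ?_, ?_, ?_, ?_⟩
    · intro k
      have hn := aux_n_pos k
      have hs : (0:ℝ) < Real.sqrt ((k:ℝ) + 2) := Real.sqrt_pos.2 hn
      refine ⟨by simpa using (by positivity : (0:ℝ) < 1 / Real.sqrt ((k:ℝ)+2)), ?_⟩
      have : (1 / Real.sqrt ((k:ℝ) + 2)) ^ 2 = 1 / ((k:ℝ) + 2) := by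
        rw [div_pow, one_pow, Real.sq_sqrt hn.le]
      simp only [Matrix.cons_val_one, Matrix.head_cons, Matrix.cons_val_zero, this]
      rw [one_div_one_div]
    · intro k
      exact ⟨Real.exp_pos _, Real.exp_lt_one_iff.2 (by linarith [aux_n_pos k])⟩
    · exact Real.tendsto_exp_atBot.comp (tendsto_neg_atTop_atBot.comp aux_tendsto_n)
    · rw [tendsto_pi_nhds]
      intro i
      fin_cases i
      · -- coordinate 0 : limit 0
        have key : Tendsto (fun k : ℕ =>
            (-1 / Real.log (Real.exp (-((k:ℝ) + 2)))) *
              Real.log (1 / Real.sqrt ((k:ℝ) + 2))) atTop (𝓝 0) := by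
          have heq : ∀ k : ℕ,
              (-1 / Real.log (Real.exp (-((k:ℝ) + 2)))) *
                Real.log (1 / Real.sqrt ((k:ℝ) + 2)) =
              -(1/2) * (Real.log ((k:ℝ) + 2) / ((k:ℝ) + 2)) := by
            intro k
            have hn := aux_n_pos k
            have hl : Real.log (1 / Real.sqrt ((k:ℝ) + 2)) =
                -(Real.log ((k:ℝ) + 2) / 2) := by
              rw [one_div, Real.log_inv, Real.log_sqrt hn.le]
            rw [Real.log_exp, hl, neg_div_neg_eq, one_div, inv_mul_eq_div]
            ring
          simp only [heq]
          have h2 : Tendsto (fun x : ℝ => Real.log x / x) atTop (𝓝 0) :=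
            Real.isLittleO_log_id_atTop.tendsto_div_nhds_zero
          have := (h2.comp aux_tendsto_n).const_mul (-(1/2) : ℝ)
          simpa using this
        simpa using key
      · -- coordinate 1 : limit -1
        have key : Tendsto (fun k : ℕ =>
            (-1 / Real.log (Real.exp (-((k:ℝ) + 2)))) *
              Real.log (Real.exp (-((k:ℝ) + 2)))) atTop (𝓝 (-1)) := by
          have heq : ∀ k : ℕ,
              (-1 / Real.log (Real.exp (-((k:ℝ) + 2)))) *
                Real.log (Real.exp (-((k:ℝ) + 2))) = -1 := by
            intro k
            have hn := aux_n_pos k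
            rw [Real.log_exp, div_mul_cancel₀ _ (neg_ne_zero.2 hn.ne')]
          simp only [heq]
          exact tendsto_const_nhds
        simpa using key
  · rintro ⟨x, a, ha, hmem, hlim⟩
    rw [tendsto_pi_nhds] at hlim
    have h0 : Tendsto (fun k => x k 0) atTop (𝓝 a) := by simpa using hlim 0
    have h1 : Tendsto (fun k => x k 1) atTop (𝓝 0) := by simpa using hlim 1
    have h1' : Tendsto (fun k => x k 1) atTop (𝓝 (Real.exp (-(1 / a ^ 2)))) := by
      have hinner : Tendsto (fun k => -(1 / (x k 0) ^ 2)) atTop (𝓝 (-(1 / a ^ 2))) :=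
        (tendsto_const_nhds.div (h0.pow 2) (by positivity)).neg
      have hcont : Tendsto (fun k => Real.exp (-(1 / (x k 0) ^ 2))) atTop
          (𝓝 (Real.exp (-(1 / a ^ 2)))) :=
        (Real.continuous_exp.tendsto _).comp hinner
      refine hcont.congr fun k => ?_
      exact ((hmem k).2).symm
    have := tendsto_nhds_unique h1 h1'
    exact absurd this.symm (Real.exp_ne_zero _)
end

section
/- The logarithmic limit set of an exponential basic cone is the corresponding basic cone: for N = (N₁,…,N_{n−1}) ∈ ℕ^{n−1} and h ∈ (0,1], setting E_{N,h} = {x ∈ (ℝ_{>0})ⁿ : ∀i, 0 < x_i ≤ h, and ∀ i < n, x_{i+1} ≤ x_i^{N_i}}, one has A₀(E_{N,h}) = B_N, where B_N = {x ∈ ℝⁿ : ∀i, x_i ≤ 0, and ∀ i < n, x_{i+1} ≤ N_i x_i}. -/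
open Filter Topology

/-- Auxiliary sequence of exponents. -/
def cseq {n : ℕ} (N : Fin n → ℕ) : ℕ → ℕ
  | 0 => 1
  | i + 1 => if hi : i < n then max 1 (N ⟨i, hi⟩ * cseq N i) else 1

lemma one_le_cseq {n : ℕ} (N : Fin n → ℕ) : ∀ i, 1 ≤ cseq N i
  | 0 => le_refl 1
  | i + 1 => by
      unfold cseq
      split
      · exact le_max_left _ _
      · exact le_refl 1

lemma cseq_succ_ge {n : ℕ} (N : Fin n → ℕ) (i : ℕ) (hi : i < n) :
    N ⟨i, hi⟩ * cseq N i ≤ cseq N (i + 1) := by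
  have he : cseq N (i + 1) = max 1 (N ⟨i, hi⟩ * cseq N i) := by
    rw [cseq, dif_pos hi]
  rw [he]
  exact le_max_right _ _

/-- the logarithmic limit set of the exponential basic cone E_{N,h} is the
basic cone B_N. -/
theorem stmt10 {n : ℕ} (N : Fin n → ℕ) (h : ℝ) (hh : h ∈ Set.Ioc (0 : ℝ) 1) :
    logLimit {x : Fin (n + 1) → ℝ | (∀ i, 0 < x i ∧ x i ≤ h) ∧
        ∀ i : Fin n, x i.succ ≤ (x i.castSucc) ^ (N i : ℝ)} =
      {x : Fin (n + 1) → ℝ | (∀ i, x i ≤ 0) ∧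
        ∀ i : Fin n, x i.succ ≤ (N i : ℝ) * x i.castSucc} := by
  obtain ⟨hh0, hh1⟩ := hh
  have hL : Real.log h ≤ 0 := Real.log_nonpos hh0.le hh1
  ext y
  constructor
  · rintro ⟨x, t, hxV, ht01, ht0, hlim⟩
    -- the positive coefficients
    set a : ℕ → ℝ := fun k => -1 / Real.log (t k) with ha_def
    have hlogt_neg : ∀ k, Real.log (t k) < 0 := fun k =>
      Real.log_neg (ht01 k).1 (ht01 k).2
    have ha_pos : ∀ k, 0 < a k := fun k =>
      div_pos_of_neg_of_neg (by norm_num) (hlogt_neg k)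
    -- log t k → -∞
    have hlogt : Tendsto (fun k => Real.log (t k)) atTop atBot := by
      refine Real.tendsto_log_nhdsGT_zero.comp ?_
      exact tendsto_nhdsWithin_iff.mpr ⟨ht0, Eventually.of_forall fun k => (ht01 k).1⟩
    -- a → 0
    have ha0 : Tendsto a atTop (𝓝 0) := by
      have h1 : Tendsto (fun k => -Real.log (t k)) atTop atTop :=
        tendsto_neg_atBot_atTop.comp hlogt
      have h2 : Tendsto (fun k => (-Real.log (t k))⁻¹) atTop (𝓝 0) :=
        tendsto_inv_atTop_zero.comp h1
      refine h2.congr fun k => ?_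
      rw [inv_neg, ha_def]
      ring
    have hlim' : ∀ i, Tendsto (fun k => a k * Real.log (x k i)) atTop (𝓝 (y i)) := by
      intro i
      exact (tendsto_pi_nhds.mp hlim) i
    constructor
    · intro i
      have hub : ∀ k, a k * Real.log (x k i) ≤ a k * Real.log h := by
        intro k
        have hx := (hxV k).1 i
        exact mul_le_mul_of_nonneg_left (Real.log_le_log hx.1 hx.2) (ha_pos k).le
      have hlim2 : Tendsto (fun k => a k * Real.log h) atTop (𝓝 (0 * Real.log h)) :=
        ha0.mul_const _
      have := le_of_tendsto_of_tendsto' (hlim' i) hlim2 hub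
      simpa using this
    · intro i
      have hub : ∀ k, a k * Real.log (x k i.succ) ≤
          (N i : ℝ) * (a k * Real.log (x k i.castSucc)) := by
        intro k
        have hx := (hxV k).2 i
        have hpos := ((hxV k).1 i.succ).1
        have hlog : Real.log (x k i.succ) ≤ (N i : ℝ) * Real.log (x k i.castSucc) := by
          have := Real.log_le_log hpos hx
          rwa [Real.log_rpow ((hxV k).1 i.castSucc).1] at this
        calc a k * Real.log (x k i.succ)
            ≤ a k * ((N i : ℝ) * Real.log (x k i.castSucc)) :=
              mul_le_mul_of_nonneg_left hlog (ha_pos k).le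
          _ = (N i : ℝ) * (a k * Real.log (x k i.castSucc)) := by ring
      exact le_of_tendsto_of_tendsto' (hlim' i.succ) ((hlim' i.castSucc).const_mul _) hub
  · rintro ⟨hy0, hycone⟩
    set L := Real.log h with hLdef
    refine ⟨fun k i => Real.exp ((cseq N i.val : ℝ) * L + ((k : ℝ) + 1) * y i),
      fun k => Real.exp (-((k : ℝ) + 1)), ?_, ?_, ?_, ?_⟩
    · intro k
      have hk1 : (0 : ℝ) ≤ (k : ℝ) + 1 := by positivity
      constructor
      · intro i
        refine ⟨Real.exp_pos _, ?_⟩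
        have hc : (1 : ℝ) ≤ (cseq N i.val : ℝ) := by exact_mod_cast one_le_cseq N i.val
        have hy := hy0 i
        calc Real.exp ((cseq N i.val : ℝ) * L + ((k : ℝ) + 1) * y i)
            ≤ Real.exp L := by
              apply Real.exp_le_exp.mpr
              nlinarith [mul_nonpos_of_nonneg_of_nonpos hk1 hy]
          _ = h := Real.exp_log hh0
      · intro i
        show Real.exp ((cseq N (i.val + 1) : ℝ) * L + ((k : ℝ) + 1) * y i.succ) ≤
          Real.exp ((cseq N i.val : ℝ) * L + ((k : ℝ) + 1) * y i.castSucc) ^ (N i : ℝ)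
        rw [← Real.exp_mul]
        apply Real.exp_le_exp.mpr
        have hc : (N i : ℝ) * (cseq N i.val : ℝ) ≤ (cseq N (i.val + 1) : ℝ) := by
          have := cseq_succ_ge N i.val i.isLt
          rw [Fin.eta] at this
          exact_mod_cast this
        have hyc := hycone i
        have hcpos : (0 : ℝ) ≤ (cseq N i.val : ℝ) := by positivity
        have hk1 : (0 : ℝ) ≤ (k : ℝ) + 1 := by positivity
        have h1 : (cseq N (i.val + 1) : ℝ) * L ≤ ((N i : ℝ) * (cseq N i.val : ℝ)) * L :=
          mul_le_mul_of_nonpos_right hc hL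
        have h2 : ((k : ℝ) + 1) * y i.succ ≤ ((k : ℝ) + 1) * ((N i : ℝ) * y i.castSucc) :=
          mul_le_mul_of_nonneg_left hyc hk1
        nlinarith
    · intro k
      exact ⟨Real.exp_pos _, Real.exp_lt_one_iff.mpr (by have : (0:ℝ) ≤ (k:ℝ) := Nat.cast_nonneg k; linarith)⟩
    · refine Real.tendsto_exp_atBot.comp ?_
      refine tendsto_neg_atTop_atBot.comp ?_
      exact tendsto_atTop_add_const_right _ 1 tendsto_natCast_atTop_atTop
    · rw [tendsto_pi_nhds]
      intro i
      have hne : ∀ k : ℕ, ((k : ℝ) + 1) ≠ 0 := fun k => by positivity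
      have hg : Tendsto (fun k : ℕ => (cseq N i.val : ℝ) * L * (1 / ((k : ℝ) + 1)) + y i)
          atTop (𝓝 (y i)) := by
        have := (tendsto_one_div_add_atTop_nhds_zero_nat.const_mul
          ((cseq N i.val : ℝ) * L)).add (tendsto_const_nhds (x := y i))
        simpa using this
      refine hg.congr fun k => ?_
      rw [Real.log_exp, Real.log_exp, neg_div_neg_eq]
      have hk := hne k
      field_simp
end

section
/- Given any sequence a(k) in (ℝ_{>0})ⁿ converging to a = (a₁,…,a_h,0,…,0) with h < n and a₁,…,a_h > 0, there exist a subsequence of a(k) and a linear map A ∈ GL_n(ℝ) such that the sequence b(k) = Ā(a(k)) is in standard position in dimension m for some m with n − m ≥ h, i.e. b(k) converges to a point (b₁,…,b_g,0,…,0) with g = n − m and b₁,…,b_g > 0, and for every N ∈ ℕ eventually b_{i+1}(k) < (b_i(k))^N for all i ∈ {g+1,…,n−1}. -/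
open Filter Topology


lemma tendsto_comp_sm {α : Type*} {u : ℕ → α} {l : Filter α}
    (h : Tendsto u atTop l) {ψ : ℕ → ℕ} (hψ : StrictMono ψ) :
    Tendsto (fun k => u (ψ k)) atTop l :=
  h.comp hψ.tendsto_atTop

lemma trichotomy_one (u : ℕ → ℝ) :
    ∃ φ : ℕ → ℕ, StrictMono φ ∧
      (Tendsto (fun k => u (φ k)) atTop atBot ∨ Tendsto (fun k => u (φ k)) atTop atTop ∨
        ∃ L, Tendsto (fun k => u (φ k)) atTop (𝓝 L)) := by
  by_cases hb : ∃ C : ℝ, ∃ᶠ k in atTop, |u k| ≤ C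
  · obtain ⟨C, hC⟩ := hb
    obtain ⟨φ₀, hφ₀, h0⟩ := extraction_of_frequently_atTop hC
    have hmem : ∀ k, u (φ₀ k) ∈ Set.Icc (-C) C := by
      intro k; exact abs_le.1 (h0 k)
    obtain ⟨L, _, φ₁, hφ₁, hL⟩ := (isCompact_Icc (a := -C) (b := C)).tendsto_subseq hmem
    exact ⟨φ₀ ∘ φ₁, hφ₀.comp hφ₁, Or.inr (Or.inr ⟨L, hL⟩)⟩
  · push_neg at hb
    have habs : Tendsto (fun k => |u k|) atTop atTop := by
      rw [tendsto_atTop]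
      intro C
      have := hb C
      filter_upwards [this] with k hk
      exact le_of_lt hk
    by_cases hp : ∃ᶠ k in atTop, 0 ≤ u k
    · obtain ⟨φ₀, hφ₀, h0⟩ := extraction_of_frequently_atTop hp
      refine ⟨φ₀, hφ₀, Or.inr (Or.inl ?_)⟩
      have : Tendsto (fun k => |u (φ₀ k)|) atTop atTop := tendsto_comp_sm habs hφ₀
      refine this.congr fun k => ?_
      exact abs_of_nonneg (h0 k)
    · rw [Filter.not_frequently] at hp
      refine ⟨id, strictMono_id, Or.inl ?_⟩
      have hev : ∀ᶠ k in atTop, u k = -|u k| := by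
        filter_upwards [hp] with k hk
        rw [abs_of_neg (not_le.1 hk), neg_neg]
      have : Tendsto (fun k => -|u k|) atTop atBot := tendsto_neg_atTop_atBot.comp habs
      exact this.congr' (by filter_upwards [hev] with k hk using hk.symm)

lemma trichotomy_many : ∀ (r : ℕ) (w : Fin r → ℕ → ℝ),
    ∃ φ : ℕ → ℕ, StrictMono φ ∧ ∀ j,
      (Tendsto (fun k => w j (φ k)) atTop atBot ∨ Tendsto (fun k => w j (φ k)) atTop atTop ∨
        ∃ L, Tendsto (fun k => w j (φ k)) atTop (𝓝 L)) := by
  intro r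
  induction r with
  | zero => exact fun w => ⟨id, strictMono_id, fun j => j.elim0⟩
  | succ r ih =>
    intro w
    obtain ⟨φ₁, hφ₁, h1⟩ := ih (fun j => w j.castSucc)
    obtain ⟨φ₂, hφ₂, h2⟩ := trichotomy_one (fun k => w (Fin.last r) (φ₁ k))
    refine ⟨φ₁ ∘ φ₂, hφ₁.comp hφ₂, fun j => ?_⟩
    induction j using Fin.lastCases with
    | last => exact h2
    | cast j' =>
      rcases h1 j' with h | h | ⟨L, h⟩
      · exact Or.inl (tendsto_comp_sm h hφ₂)
      · exact Or.inr (Or.inl (tendsto_comp_sm h hφ₂))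
      · exact Or.inr (Or.inr ⟨L, tendsto_comp_sm h hφ₂⟩)

theorem key : ∀ m : ℕ, ∀ t : Fin m → ℕ → ℝ, (∀ j, Tendsto (t j) atTop atBot) →
    ∃ (φ : ℕ → ℕ) (E : (Fin m → ℝ) ≃ₗ[ℝ] (Fin m → ℝ)) (q : ℕ) (L : Fin m → ℝ),
      StrictMono φ ∧ q ≤ m ∧ (0 < m → q < m) ∧
      (∀ i : Fin m, (i:ℕ) < q → Tendsto (fun k => E (fun j => t j (φ k)) i) atTop (𝓝 (L i))) ∧
      (∀ i : Fin m, q ≤ (i:ℕ) → Tendsto (fun k => E (fun j => t j (φ k)) i) atTop atBot) ∧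
      (∀ M : ℝ, ∀ i i' : Fin m, (i':ℕ) = (i:ℕ) + 1 → q ≤ (i:ℕ) →
        ∀ᶠ k in atTop, E (fun j => t j (φ k)) i' < M * E (fun j => t j (φ k)) i) := by
  intro m
  induction m using Nat.strong_induction_on with
  | _ m IH =>
  obtain _ | m' := m
  · intro t ht
    refine ⟨id, LinearEquiv.refl ℝ _, 0, fun i => i.elim0, strictMono_id, le_refl _,
      fun h => absurd h (lt_irrefl 0), fun i hi => absurd hi (by omega), fun i _ => i.elim0,
      fun M i => i.elim0⟩
  · intro t ht
    classical
    -- step 1 : shift so that all t j k < -1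
    have hev : ∀ᶠ k in atTop, ∀ j, t j k < -1 := by
      rw [eventually_all]
      exact fun j => (ht j).eventually (eventually_lt_atBot (-1))
    obtain ⟨k₀, hk₀⟩ := eventually_atTop.1 hev
    set φA : ℕ → ℕ := fun k => k + k₀ with hφA
    have hφAsm : StrictMono φA := fun a b hab => by simp only [hφA]; omega
    have hneg : ∀ j k, t j (φA k) < -1 := fun j k => hk₀ (k + k₀) (by omega) j
    -- the sum sequence
    set s : ℕ → ℝ := fun k => ∑ j, t j k with hs
    have hsneg : ∀ k, s (φA k) < 0 := by
      intro k
      have h1 : s (φA k) ≤ ∑ _j : Fin (m' + 1), (-1 : ℝ) :=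
        Finset.sum_le_sum fun j _ => le_of_lt (hneg j k)
      have h2 : ∑ _j : Fin (m' + 1), (-1 : ℝ) = -(m' + 1 : ℝ) := by simp
      have h3 : (0:ℝ) < (m' + 1 : ℝ) := by positivity
      linarith
    have hsle : ∀ j k, s (φA k) ≤ t j (φA k) := by
      intro j k
      show ∑ x, t x (φA k) ≤ t j (φA k)
      rw [← Finset.add_sum_erase _ _ (Finset.mem_univ j)]
      have : ∑ x ∈ Finset.univ.erase j, t x (φA k) ≤ 0 :=
        Finset.sum_nonpos fun x _ => le_of_lt (lt_trans (hneg x k) (by norm_num))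
      linarith
    have hstend : Tendsto s atTop atBot := by
      have hub : ∀ᶠ k in atTop, s k ≤ t 0 k := by
        filter_upwards [hev] with k hk
        show ∑ x, t x k ≤ t 0 k
        rw [← Finset.add_sum_erase _ _ (Finset.mem_univ 0)]
        have : ∑ x ∈ Finset.univ.erase 0, t x k ≤ 0 :=
          Finset.sum_nonpos fun x _ => le_of_lt (lt_trans (hk x) (by norm_num))
        linarith
      exact tendsto_atBot_mono' atTop hub (ht 0)
    -- step 2 : ratios converge along a subsequence
    set R : ℕ → (Fin (m'+1) → ℝ) := fun k j => t j (φA k) / s (φA k) with hR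
    have hmem : ∀ k, R k ∈ Set.Icc (0 : Fin (m'+1) → ℝ) 1 := by
      intro k
      constructor
      · intro j
        show (0:ℝ) ≤ t j (φA k) / s (φA k)
        rw [div_nonneg_iff]
        exact Or.inr ⟨le_of_lt (lt_trans (hneg j k) (by norm_num)), le_of_lt (hsneg k)⟩
      · intro j
        show t j (φA k) / s (φA k) ≤ 1
        rw [div_le_one_iff]
        exact Or.inr (Or.inr ⟨hsneg k, hsle j k⟩)
    obtain ⟨c, -, φB, hφBsm, hc⟩ :=
      (isCompact_Icc (a := (0 : Fin (m'+1) → ℝ)) (b := 1)).tendsto_subseq hmem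
    have hcj : ∀ j, Tendsto (fun k => R (φB k) j) atTop (𝓝 (c j)) :=
      fun j => tendsto_pi_nhds.1 hc j
    -- step 3 : the residuals w and their smallness
    set w : Fin (m'+1) → ℕ → ℝ := fun j k => t j k - c j * s k with hw
    have hw0 : ∀ j, Tendsto (fun k => w j (φA (φB k)) / s (φA (φB k))) atTop (𝓝 0) := by
      intro j
      have heq : ∀ k, w j (φA (φB k)) / s (φA (φB k)) = R (φB k) j - c j := by
        intro k
        have hne : s (φA (φB k)) ≠ 0 := ne_of_lt (hsneg (φB k))
        show (t j (φA (φB k)) - c j * s (φA (φB k))) / s (φA (φB k))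
          = t j (φA (φB k)) / s (φA (φB k)) - c j
        field_simp
      have h := (hcj j).sub_const (c j)
      rw [sub_self] at h
      exact h.congr fun k => (heq k).symm
    -- step 4 : trichotomy for residuals
    obtain ⟨φC, hφCsm, htri⟩ := trichotomy_many m' (fun j k => w (Fin.castSucc j) (φA (φB k)))
    set P : Fin m' → Prop :=
      fun j => ∃ L, Tendsto (fun k => w (Fin.castSucc j) (φA (φB (φC k)))) atTop (𝓝 L) with hP
    set F : Finset (Fin m') := Finset.univ.filter P with hF
    set D : Finset (Fin m') := Finset.univ.filter (fun j => ¬ P j) with hD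
    set f := F.card with hf
    set d := D.card with hd
    have hFD : f + d = m' := by
      rw [hf, hd, hF, hD, Finset.card_filter_add_card_filter_not]
      simp
    set ε : Fin m' → ℝ := fun j =>
      if Tendsto (fun k => w (Fin.castSucc j) (φA (φB (φC k)))) atTop atBot then 1 else -1
      with hε
    have hepm : ∀ j, ε j = 1 ∨ ε j = -1 := by
      intro j
      by_cases hcond : Tendsto (fun k => w (Fin.castSucc j) (φA (φB (φC k)))) atTop atBot
      · exact Or.inl (if_pos hcond)
      · exact Or.inr (if_neg hcond)
    have hεne : ∀ j, ε j ≠ 0 := by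
      intro j; rcases hepm j with h | h <;> rw [h] <;> norm_num
    have hDdiv : ∀ j ∈ D, Tendsto (fun k => ε j * w (Fin.castSucc j) (φA (φB (φC k)))) atTop atBot := by
      intro j hj
      have hnP : ¬ P j := by
        rw [hD] at hj
        exact (Finset.mem_filter.1 hj).2
      rcases htri j with hb | htp | hfin
      · have hεj : ε j = 1 := if_pos hb
        rw [hεj]
        simpa using hb
      · have hnb : ¬ Tendsto (fun k => w (Fin.castSucc j) (φA (φB (φC k)))) atTop atBot := by
          intro hcon
          obtain ⟨k, hk1, hk2⟩ :=
            ((hcon.eventually (eventually_lt_atBot 0)).and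
              (htp.eventually (eventually_gt_atTop 0))).exists
          linarith
        have hεj : ε j = -1 := if_neg hnb
        rw [hεj]
        have hcomp := tendsto_neg_atTop_atBot.comp htp
        refine hcomp.congr fun k => ?_
        simp [Function.comp]
      · exact absurd hfin hnP
    have hFlim : ∀ j ∈ F, P j := by
      intro j hj
      rw [hF] at hj
      exact (Finset.mem_filter.1 hj).2
    set LF : Fin m' → ℝ := fun j => if h : P j then h.choose else 0 with hLF
    have hLFt : ∀ j, P j →
        Tendsto (fun k => w (Fin.castSucc j) (φA (φB (φC k)))) atTop (𝓝 (LF j)) := by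
      intro j hj
      rw [hLF]
      simp only [dif_pos hj]
      exact hj.choose_spec
    -- step 5 : recursion on divergent residuals
    set eD : Fin d ≃o {x // x ∈ D} := D.orderIsoOfFin hd.symm with heD
    set eF : Fin f ≃o {x // x ∈ F} := F.orderIsoOfFin hf.symm with heF
    set t' : Fin d → ℕ → ℝ :=
      fun a k => ε ((eD a) : Fin m') * w (Fin.castSucc ((eD a) : Fin m')) (φA (φB (φC k))) with ht'
    have ht'b : ∀ a, Tendsto (t' a) atTop atBot := fun a => hDdiv _ (eD a).2
    obtain ⟨φD, E', q', L', hφDsm, hq'le, hq'lt, hfin', hbot', hchain'⟩ :=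
      IH d (by omega) t' ht'b
    set φ : ℕ → ℕ := fun k => φA (φB (φC (φD k))) with hφ
    have hφsm : StrictMono φ := hφAsm.comp (hφBsm.comp (hφCsm.comp hφDsm))
    -- step 6 : the linear maps
    set sumMap : (Fin (m'+1) → ℝ) →ₗ[ℝ] ℝ := ∑ i, LinearMap.proj i with hsum
    have hsumMap : ∀ x : Fin (m'+1) → ℝ, sumMap x = ∑ i, x i := by
      intro x
      rw [hsum]
      simp [LinearMap.sum_apply, LinearMap.proj_apply]
    set fstep : (Fin (m'+1) → ℝ) →ₗ[ℝ] (Fin (m'+1) → ℝ) :=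
      LinearMap.pi (fun j : Fin (m'+1) =>
        if (j:ℕ) < m' then LinearMap.proj j - (c j) • sumMap else sumMap) with hfstep
    have hfstep_lt : ∀ (x : Fin (m'+1) → ℝ) (j : Fin (m'+1)), (j:ℕ) < m' →
        fstep x j = x j - c j * sumMap x := by
      intro x j hj
      show (LinearMap.pi (fun j : Fin (m'+1) =>
        if (j:ℕ) < m' then LinearMap.proj j - (c j) • sumMap else sumMap)) x j = _
      rw [LinearMap.pi_apply, if_pos hj]
      simp [LinearMap.sub_apply, LinearMap.smul_apply, LinearMap.proj_apply, smul_eq_mul]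
    have hfstep_last : ∀ (x : Fin (m'+1) → ℝ), fstep x (Fin.last m') = sumMap x := by
      intro x
      show (LinearMap.pi (fun j : Fin (m'+1) =>
        if (j:ℕ) < m' then LinearMap.proj j - (c j) • sumMap else sumMap)) x (Fin.last m') = _
      rw [LinearMap.pi_apply, if_neg (by simp [Fin.last])]
    have hinj : Function.Injective fstep := by
      rw [injective_iff_map_eq_zero]
      intro x hx
      have hS : sumMap x = 0 := by
        have h0 := congrFun hx (Fin.last m')
        rw [hfstep_last] at h0
        simpa using h0
      have hlt : ∀ j : Fin (m'+1), (j:ℕ) < m' → x j = 0 := by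
        intro j hj
        have h0 := congrFun hx j
        rw [hfstep_lt x j hj] at h0
        simp [hS] at h0
        exact h0
      funext j
      induction j using Fin.lastCases with
      | last =>
        have := hsumMap x
        rw [hS] at this
        rw [Fin.sum_univ_castSucc] at this
        have hz : ∀ j : Fin m', x (Fin.castSucc j) = 0 :=
          fun j => hlt _ (by simp)
        simp only [hz] at this
        simp at this
        simp [this]
      | cast j' => exact hlt _ (by simp)
    set Estep : (Fin (m'+1) → ℝ) ≃ₗ[ℝ] (Fin (m'+1) → ℝ) :=
      LinearEquiv.ofBijective fstep ⟨hinj, (LinearMap.injective_iff_surjective).1 hinj⟩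
      with hEstep
    set gather : (Fin (m'+1) → ℝ) →ₗ[ℝ] (Fin d → ℝ) :=
      LinearMap.pi (fun a : Fin d =>
        ε ((eD a) : Fin m') • LinearMap.proj (Fin.castSucc ((eD a) : Fin m'))) with hgather
    have hgather_apply : ∀ (x : Fin (m'+1) → ℝ) (a : Fin d),
        gather x a = ε ((eD a) : Fin m') * x (Fin.castSucc ((eD a) : Fin m')) := by
      intro x a
      show (LinearMap.pi (fun a : Fin d =>
        ε ((eD a) : Fin m') • LinearMap.proj (Fin.castSucc ((eD a) : Fin m')))) x a = _
      rw [LinearMap.pi_apply]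
      simp [LinearMap.smul_apply, LinearMap.proj_apply, smul_eq_mul]
    set Gmap : (Fin (m'+1) → ℝ) →ₗ[ℝ] (Fin (m'+1) → ℝ) :=
      LinearMap.pi (fun i : Fin (m'+1) =>
        if h1 : (i:ℕ) < f then LinearMap.proj (Fin.castSucc ((eF ⟨(i:ℕ), h1⟩) : Fin m'))
        else if h2 : (i:ℕ) < f + d then
          (LinearMap.proj (⟨(i:ℕ) - f, by omega⟩ : Fin d)).comp
            ((E' : (Fin d → ℝ) →ₗ[ℝ] (Fin d → ℝ)).comp gather)
        else LinearMap.proj (Fin.last m')) with hGmap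
    have hG1 : ∀ (x : Fin (m'+1) → ℝ) (i : Fin (m'+1)) (h1 : (i:ℕ) < f),
        Gmap x i = x (Fin.castSucc ((eF ⟨(i:ℕ), h1⟩) : Fin m')) := by
      intro x i h1
      show (LinearMap.pi _) x i = _
      rw [LinearMap.pi_apply]
      rw [dif_pos h1]
      simp [LinearMap.proj_apply]
    have hG2 : ∀ (x : Fin (m'+1) → ℝ) (i : Fin (m'+1)) (h1 : ¬ (i:ℕ) < f)
        (h2 : (i:ℕ) < f + d),
        Gmap x i = E' (gather x) (⟨(i:ℕ) - f, by omega⟩ : Fin d) := by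
      intro x i h1 h2
      show (LinearMap.pi _) x i = _
      rw [LinearMap.pi_apply]
      rw [dif_neg h1, dif_pos h2]
      simp [LinearMap.comp_apply, LinearMap.proj_apply]
    have hG3 : ∀ (x : Fin (m'+1) → ℝ) (i : Fin (m'+1)), ¬ ((i:ℕ) < f + d) →
        Gmap x i = x (Fin.last m') := by
      intro x i h2
      have h1 : ¬ (i:ℕ) < f := by omega
      show (LinearMap.pi _) x i = _
      rw [LinearMap.pi_apply]
      rw [dif_neg h1, dif_neg h2]
      simp [LinearMap.proj_apply]
    have hGinj : Function.Injective Gmap := by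
      rw [injective_iff_map_eq_zero]
      intro x hx
      have hmid : ∀ b : Fin d, E' (gather x) b = 0 := by
        intro b
        have hblt : f + (b:ℕ) < f + d := by omega
        have h0 := congrFun hx (⟨f + (b:ℕ), by omega⟩ : Fin (m'+1))
        rw [hG2 x _ (by simp) (by simp)] at h0
        have hbeq : (⟨(((⟨f + (b:ℕ), by omega⟩ : Fin (m'+1)):ℕ)) - f, by simp⟩ : Fin d) = b := by
          apply Fin.ext
          simp
        rw [hbeq] at h0
        simpa using h0
      have hgz : gather x = 0 := by
        have : E' (gather x) = 0 := funext fun b => by simpa using hmid b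
        exact (LinearEquiv.map_eq_zero_iff E').1 this
      have hDz : ∀ a : Fin d, x (Fin.castSucc ((eD a) : Fin m')) = 0 := by
        intro a
        have h0 := congrFun hgz a
        rw [hgather_apply] at h0
        simp at h0
        rcases h0 with h | h
        · exact absurd h (hεne _)
        · exact h
      have hFz : ∀ b : Fin f, x (Fin.castSucc ((eF b) : Fin m')) = 0 := by
        intro b
        have h0 := congrFun hx (⟨(b:ℕ), by omega⟩ : Fin (m'+1))
        rw [hG1 x _ (by simp)] at h0
        have hbe : (⟨((⟨(b:ℕ), by omega⟩ : Fin (m'+1)) : ℕ), by simp⟩ : Fin f) = b := by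
          apply Fin.ext; simp
        rw [show ((eF ⟨((⟨(b:ℕ), by omega⟩ : Fin (m'+1)) : ℕ), by simp⟩) : Fin m')
            = ((eF b) : Fin m') by rw [hbe]] at h0
        simpa using h0
      have hlast : x (Fin.last m') = 0 := by
        have h0 := congrFun hx (Fin.last m')
        rw [hG3 x _ (by simp [Fin.last]; omega)] at h0
        simpa using h0
      funext j
      induction j using Fin.lastCases with
      | last => exact hlast
      | cast j' =>
        by_cases hPj : P j'
        · have hjF : j' ∈ F := by rw [hF]; simp [hPj]
          obtain ⟨b, hb⟩ := eF.surjective ⟨j', hjF⟩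
          have : ((eF b) : Fin m') = j' := by rw [hb]
          rw [← this]
          exact hFz b
        · have hjD : j' ∈ D := by rw [hD]; simp [hPj]
          obtain ⟨a, hA⟩ := eD.surjective ⟨j', hjD⟩
          have : ((eD a) : Fin m') = j' := by rw [hA]
          rw [← this]
          exact hDz a
    set Gequiv : (Fin (m'+1) → ℝ) ≃ₗ[ℝ] (Fin (m'+1) → ℝ) :=
      LinearEquiv.ofBijective Gmap ⟨hGinj, (LinearMap.injective_iff_surjective).1 hGinj⟩
      with hGequiv
    set E : (Fin (m'+1) → ℝ) ≃ₗ[ℝ] (Fin (m'+1) → ℝ) := Estep.trans Gequiv with hE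
    have hEapp : ∀ x : Fin (m'+1) → ℝ, E x = Gmap (fstep x) := by
      intro x
      rw [hE]
      rfl
    -- step 7 : component computations
    have hX1 : ∀ (k : ℕ) (j : Fin m'), fstep (fun j0 => t j0 (φ k)) (Fin.castSucc j)
        = w (Fin.castSucc j) (φ k) := by
      intro k j
      rw [hfstep_lt _ _ (by simp), hsumMap]
    have hX2 : ∀ k, fstep (fun j0 => t j0 (φ k)) (Fin.last m') = s (φ k) := by
      intro k
      rw [hfstep_last, hsumMap]
    have hgX : ∀ k, gather (fstep (fun j0 => t j0 (φ k))) = fun a => t' a (φD k) := by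
      intro k
      funext a
      rw [hgather_apply, hX1]
    -- pointwise values of E
    have eMid : ∀ (i : Fin (m'+1)) (h1 : ¬ (i:ℕ) < f) (h2 : (i:ℕ) < f + d) (k : ℕ),
        E (fun j => t j (φ k)) i = E' (fun a => t' a (φD k)) (⟨(i:ℕ) - f, by omega⟩ : Fin d) := by
      intro i h1 h2 k
      rw [hEapp, hG2 _ _ h1 h2, hgX]
    have eF' : ∀ (i : Fin (m'+1)) (h1 : (i:ℕ) < f) (k : ℕ),
        E (fun j => t j (φ k)) i = w (Fin.castSucc ((eF ⟨(i:ℕ), h1⟩) : Fin m')) (φ k) := by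
      intro i h1 k
      rw [hEapp, hG1 _ _ h1, hX1]
    have eLast : ∀ (i : Fin (m'+1)) (h2 : ¬ ((i:ℕ) < f + d)) (k : ℕ),
        E (fun j => t j (φ k)) i = s (φ k) := by
      intro i h2 k
      rw [hEapp, hG3 _ _ h2, hX2]
    -- the limits
    set Lfun : Fin (m'+1) → ℝ := fun i =>
      if h1 : (i:ℕ) < f then LF ((eF ⟨(i:ℕ), h1⟩) : Fin m')
      else if h2 : (i:ℕ) - f < d then L' ⟨(i:ℕ) - f, h2⟩ else 0 with hLfun
    refine ⟨φ, E, f + q', Lfun, hφsm, by omega, fun _ => by omega, ?_, ?_, ?_⟩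
    · -- finite block
      intro i hi
      by_cases h1 : (i:ℕ) < f
      · have hLi : Lfun i = LF ((eF ⟨(i:ℕ), h1⟩) : Fin m') := by
          rw [hLfun]; simp only [dif_pos h1]
        rw [hLi]
        have hlim := tendsto_comp_sm
          (hLFt ((eF ⟨(i:ℕ), h1⟩) : Fin m') (hFlim _ (eF ⟨(i:ℕ), h1⟩).2)) hφDsm
        exact hlim.congr fun k => (eF' i h1 k).symm
      · have h2 : (i:ℕ) - f < d := by omega
        have hLi : Lfun i = L' ⟨(i:ℕ) - f, h2⟩ := by
          rw [hLfun]; simp only [dif_neg h1, dif_pos h2]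
        rw [hLi]
        have hlim := hfin' (⟨(i:ℕ) - f, h2⟩ : Fin d) (by simp; omega)
        exact hlim.congr fun k => (eMid i h1 (by omega) k).symm
    · -- divergent block
      intro i hi
      by_cases h2 : (i:ℕ) < f + d
      · have h1 : ¬ (i:ℕ) < f := by omega
        have hlim := hbot' (⟨(i:ℕ) - f, by omega⟩ : Fin d) (by simp; omega)
        exact hlim.congr fun k => (eMid i h1 h2 k).symm
      · have hlim := tendsto_comp_sm hstend hφsm
        exact hlim.congr fun k => (eLast i h2 k).symm
    · -- the chain
      intro M i i' hii' hi
      have hi'le : (i':ℕ) ≤ m' := by omega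
      by_cases h2 : (i':ℕ) < f + d
      · -- both inside the recursive chain
        have h1 : ¬ (i:ℕ) < f := by omega
        have h1' : ¬ (i':ℕ) < f := by omega
        have h2i : (i:ℕ) < f + d := by omega
        have hch := hchain' M (⟨(i:ℕ) - f, by omega⟩ : Fin d) (⟨(i':ℕ) - f, by omega⟩ : Fin d)
          (by simp; omega) (by simp; omega)
        refine hch.mono fun k hk => ?_
        rw [eMid i h1 h2i k, eMid i' h1' h2 k]
        exact hk
      · -- boundary pair : last chain element of the recursion, then s
        have h2i : (i:ℕ) < f + d := by omega
        have h1 : ¬ (i:ℕ) < f := by omega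
        set b : Fin d := ⟨(i:ℕ) - f, by omega⟩ with hb
        have hqb : q' ≤ (b:ℕ) := by simp [hb]; omega
        -- the ratio tends to zero
        have hρ : Tendsto (fun k => E' (fun a => t' a (φD k)) b / s (φ k)) atTop (𝓝 0) := by
          have hvec : Tendsto (fun k => fun a : Fin d => t' a (φD k) / s (φ k)) atTop
              (𝓝 (0 : Fin d → ℝ)) := by
            rw [tendsto_pi_nhds]
            intro a
            have hw0' := tendsto_comp_sm (hw0 (Fin.castSucc ((eD a) : Fin m')))
              (hφCsm.comp hφDsm)
            have h2' := hw0'.const_mul (ε ((eD a) : Fin m'))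
            rw [mul_zero] at h2'
            have : (0 : (Fin d → ℝ)) a = 0 := rfl
            rw [this]
            refine h2'.congr fun k => ?_
            show ε _ * (w _ (φ k) / s (φ k)) = t' a (φD k) / s (φ k)
            rw [mul_div_assoc]
          have hcont : Continuous (fun y : Fin d → ℝ => E' y b) :=
            (continuous_apply b).comp
              (LinearMap.continuous_of_finiteDimensional
                (E' : (Fin d → ℝ) →ₗ[ℝ] (Fin d → ℝ)))
          have hkey := (hcont.tendsto (0 : Fin d → ℝ)).comp hvec
          have hz0 : E' (0 : Fin d → ℝ) b = 0 := by
            rw [map_zero]; rfl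
          rw [hz0] at hkey
          refine hkey.congr fun k => ?_
          have hsne : s (φ k) ≠ 0 := ne_of_lt (hsneg (φB (φC (φD k))))
          show E' (fun a => t' a (φD k) / s (φ k)) b = E' (fun a => t' a (φD k)) b / s (φ k)
          have hveq : (fun a => t' a (φD k) / s (φ k))
              = (s (φ k))⁻¹ • (fun a => t' a (φD k)) := by
            funext a
            simp [div_eq_inv_mul]
          rw [hveq, map_smul]
          simp [smul_eq_mul, div_eq_inv_mul]
        rcases le_or_gt M 0 with hM | hM
        · have hzneg := (hbot' b hqb).eventually (eventually_lt_atBot 0)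
          refine hzneg.mono fun k hk => ?_
          rw [eMid i h1 h2i k, eLast i' h2 k]
          have hsn : s (φ k) < 0 := hsneg (φB (φC (φD k)))
          have hbb : E' (fun a => t' a (φD k)) (⟨(i:ℕ) - f, by omega⟩ : Fin d)
              = E' (fun a => t' a (φD k)) b := rfl
          rw [hbb]
          obtain ⟨z, hzg⟩ : ∃ z, E' (fun a => t' a (φD k)) b = z := ⟨_, rfl⟩
          rw [hzg] at hk ⊢
          obtain ⟨y, hyg⟩ : ∃ y, s (φ k) = y := ⟨_, rfl⟩
          rw [hyg] at hsn ⊢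
          have h := mul_nonneg (neg_nonneg.2 hM) (neg_nonneg.2 hk.le)
          rw [neg_mul_neg] at h
          linarith
        · have hev1 := hρ.eventually_lt_const (by positivity : (0:ℝ) < 1/M)
          refine hev1.mono fun k hk => ?_
          rw [eMid i h1 h2i k, eLast i' h2 k]
          have hbb : E' (fun a => t' a (φD k)) (⟨(i:ℕ) - f, by omega⟩ : Fin d)
              = E' (fun a => t' a (φD k)) b := rfl
          rw [hbb]
          have hsn : s (φ k) < 0 := hsneg (φB (φC (φD k)))
          obtain ⟨z, hzg⟩ : ∃ z, E' (fun a => t' a (φD k)) b = z := ⟨_, rfl⟩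
          rw [hzg] at hk ⊢
          obtain ⟨y, hyg⟩ : ∃ y, s (φ k) = y := ⟨_, rfl⟩
          rw [hyg] at hk hsn ⊢
          have hyne : y ≠ 0 := ne_of_lt hsn
          have h1' : z / y * M < 1 := (lt_div_iff₀ hM).1 hk
          have hzz : z / y * y = z := div_mul_cancel₀ z hyne
          have hmul := mul_lt_mul_of_neg_right h1' hsn
          have hre : z / y * M * y = M * z := by
            rw [mul_comm (z / y) M, mul_assoc, hzz]
          rw [hre, one_mul] at hmul
          linarith

/-- any positive sequence converging to a point with h positive coordinates
followed by zeros admits, after passing to a subsequence and applying a monomial change of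
coordinates given by an invertible matrix A, a sequence in standard position in dimension
m with g = n - m ≥ h. -/
theorem stmt12 {n h : ℕ} (hhn : h < n) (a : ℕ → Fin n → ℝ)
    (ha : ∀ k i, 0 < a k i) (al : Fin n → ℝ)
    (hpos : ∀ i : Fin n, (i : ℕ) < h → 0 < al i)
    (hzero : ∀ i : Fin n, h ≤ (i : ℕ) → al i = 0)
    (hconv : Tendsto a atTop (𝓝 al)) :
    ∃ (φ : ℕ → ℕ) (A : Matrix (Fin n) (Fin n) ℝ) (g : ℕ) (bl : Fin n → ℝ),
      StrictMono φ ∧ IsUnit A.det ∧ h ≤ g ∧ g < n ∧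
      (∀ i : Fin n, (i : ℕ) < g → 0 < bl i) ∧
      (∀ i : Fin n, g ≤ (i : ℕ) → bl i = 0) ∧
      Tendsto (fun k => fun i : Fin n =>
        Real.exp (∑ j, A i j * Real.log (a (φ k) j))) atTop (𝓝 bl) ∧
      ∀ M : ℕ, ∃ k₀, ∀ k > k₀, ∀ i j : Fin n, (j : ℕ) = (i : ℕ) + 1 → g ≤ (i : ℕ) →
        Real.exp (∑ l, A j l * Real.log (a (φ k) l)) <
          (Real.exp (∑ l, A i l * Real.log (a (φ k) l))) ^ (M : ℝ) := by
  classical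
  set m : ℕ := n - h with hm
  have hmpos : 0 < m := by omega
  have hhmn : h + m = n := by omega
  set eS : Fin h ⊕ Fin m ≃ Fin n := finSumFinEquiv.trans (finCongr hhmn) with heS
  have hvall : ∀ i1 : Fin h, ((eS (Sum.inl i1)) : ℕ) = (i1:ℕ) := by
    intro i1; simp [heS]
  have hvalr : ∀ i2 : Fin m, ((eS (Sum.inr i2)) : ℕ) = h + (i2:ℕ) := by
    intro i2; simp [heS]
  set t : Fin m → ℕ → ℝ := fun j k => Real.log (a k (eS (Sum.inr j))) with htdef
  have ht : ∀ j, Tendsto (t j) atTop atBot := by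
    intro j
    have hcomp : Tendsto (fun k => a k (eS (Sum.inr j))) atTop (𝓝 (al (eS (Sum.inr j)))) :=
      tendsto_pi_nhds.1 hconv _
    have hz : al (eS (Sum.inr j)) = 0 := hzero _ (by rw [hvalr]; omega)
    rw [hz] at hcomp
    have hw : Tendsto (fun k => a k (eS (Sum.inr j))) atTop (𝓝[≠] (0:ℝ)) := by
      refine tendsto_nhdsWithin_of_tendsto_nhds_of_eventually_within _ hcomp ?_
      exact Eventually.of_forall fun k => ne_of_gt (ha k _)
    exact Real.tendsto_log_nhdsNE_zero.comp hw
  obtain ⟨φ, E, q, L, hφsm, hqm, hqlt, hfin, hbot, hchain⟩ := key m t ht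
  set B : Matrix (Fin m) (Fin m) ℝ := LinearMap.toMatrix' (E : (Fin m → ℝ) →ₗ[ℝ] (Fin m → ℝ))
    with hB
  have hBdet : IsUnit B.det := by
    have hcomp : (E : (Fin m → ℝ) →ₗ[ℝ] (Fin m → ℝ)) ∘ₗ
        (E.symm : (Fin m → ℝ) →ₗ[ℝ] (Fin m → ℝ)) = LinearMap.id := by
      ext x
      simp
    have hmul : B * LinearMap.toMatrix' (E.symm : (Fin m → ℝ) →ₗ[ℝ] (Fin m → ℝ)) = 1 := by
      rw [hB, ← LinearMap.toMatrix'_comp, hcomp, LinearMap.toMatrix'_id]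
    have := congrArg Matrix.det hmul
    rw [Matrix.det_mul, Matrix.det_one] at this
    exact IsUnit.of_mul_eq_one _ this
  have hBapp : ∀ (v : Fin m → ℝ) (i : Fin m), (∑ j, B i j * v j) = E v i := by
    intro v i
    have h1 : E v = Matrix.toLin' B v := by rw [hB, Matrix.toLin'_toMatrix']; rfl
    rw [h1, Matrix.toLin'_apply]
    simp [Matrix.mulVec, dotProduct]
  set A : Matrix (Fin n) (Fin n) ℝ :=
    Matrix.reindex eS eS (Matrix.fromBlocks 1 0 0 B) with hA
  have hAdet : IsUnit A.det := by
    rw [hA, Matrix.det_reindex_self, Matrix.det_fromBlocks_zero₂₁, Matrix.det_one, one_mul]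
    exact hBdet
  have hrow_head : ∀ (i1 : Fin h) (v : Fin n → ℝ),
      (∑ j, A (eS (Sum.inl i1)) j * v j) = v (eS (Sum.inl i1)) := by
    intro i1 v
    rw [← Equiv.sum_comp eS (fun j => A (eS (Sum.inl i1)) j * v j)]
    rw [Fintype.sum_sum_type]
    have hle : ∀ j1 : Fin h, A (eS (Sum.inl i1)) (eS (Sum.inl j1))
        = (1 : Matrix (Fin h) (Fin h) ℝ) i1 j1 := by
      intro j1
      rw [hA]
      simp [Matrix.reindex_apply, Matrix.submatrix_apply]
    have hre : ∀ j2 : Fin m, A (eS (Sum.inl i1)) (eS (Sum.inr j2)) = 0 := by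
      intro j2
      rw [hA]
      simp [Matrix.reindex_apply, Matrix.submatrix_apply]
    simp only [hle, hre, zero_mul, Finset.sum_const_zero, add_zero, Matrix.one_apply]
    simp [Finset.sum_ite_eq, Finset.mem_univ]
  have hrow_tail : ∀ (i2 : Fin m) (v : Fin n → ℝ),
      (∑ j, A (eS (Sum.inr i2)) j * v j) = E (fun j2 => v (eS (Sum.inr j2))) i2 := by
    intro i2 v
    rw [← Equiv.sum_comp eS (fun j => A (eS (Sum.inr i2)) j * v j)]
    rw [Fintype.sum_sum_type]
    have hle : ∀ j1 : Fin h, A (eS (Sum.inr i2)) (eS (Sum.inl j1)) = 0 := by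
      intro j1
      rw [hA]
      simp [Matrix.reindex_apply, Matrix.submatrix_apply]
    have hre : ∀ j2 : Fin m, A (eS (Sum.inr i2)) (eS (Sum.inr j2)) = B i2 j2 := by
      intro j2
      rw [hA]
      simp [Matrix.reindex_apply, Matrix.submatrix_apply]
    simp only [hle, hre, zero_mul, Finset.sum_const_zero, zero_add]
    exact hBapp _ i2
  set g : ℕ := h + q with hg
  set bl : Fin n → ℝ := fun i =>
    if h1 : (i:ℕ) < h then al i
    else if h2 : (i:ℕ) - h < q then Real.exp (L ⟨(i:ℕ) - h, by omega⟩) else 0 with hbl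
  refine ⟨φ, A, g, bl, hφsm, hAdet, by omega, by omega, ?_, ?_, ?_, ?_⟩
  · -- positivity of bl on initial block
    intro i hi
    rw [hbl]
    by_cases h1 : (i:ℕ) < h
    · simp only [dif_pos h1]
      exact hpos i h1
    · have h2 : (i:ℕ) - h < q := by omega
      simp only [dif_neg h1, dif_pos h2]
      exact Real.exp_pos _
  · -- vanishing of bl on final block
    intro i hi
    rw [hbl]
    have h1 : ¬ (i:ℕ) < h := by omega
    have h2 : ¬ ((i:ℕ) - h < q) := by omega
    simp only [dif_neg h1, dif_neg h2]
  · -- convergence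
    rw [tendsto_pi_nhds]
    intro i
    obtain ⟨x, hx⟩ : ∃ x, eS x = i := ⟨eS.symm i, eS.apply_symm_apply i⟩
    subst hx
    cases x with
    | inl i1 =>
      have heq : ∀ k, Real.exp (∑ j, A (eS (Sum.inl i1)) j * Real.log (a (φ k) j))
          = a (φ k) (eS (Sum.inl i1)) := by
        intro k
        rw [hrow_head i1 (fun j => Real.log (a (φ k) j))]
        exact Real.exp_log (ha _ _)
      have hlim : Tendsto (fun k => a (φ k) (eS (Sum.inl i1))) atTop
          (𝓝 (al (eS (Sum.inl i1)))) :=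
        tendsto_comp_sm (tendsto_pi_nhds.1 hconv _) hφsm
      have hbleq : bl (eS (Sum.inl i1)) = al (eS (Sum.inl i1)) := by
        rw [hbl]
        have h1 : ((eS (Sum.inl i1)):ℕ) < h := by rw [hvall]; omega
        simp only [dif_pos h1]
      rw [hbleq]
      exact hlim.congr fun k => (heq k).symm
    | inr i2 =>
      have heq : ∀ k, (∑ j, A (eS (Sum.inr i2)) j * Real.log (a (φ k) j))
          = E (fun j2 => t j2 (φ k)) i2 := by
        intro k
        rw [hrow_tail i2 (fun j => Real.log (a (φ k) j))]
      have hv : ((eS (Sum.inr i2)):ℕ) = h + (i2:ℕ) := hvalr i2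
      by_cases hq : (i2:ℕ) < q
      · have hlim := hfin i2 hq
        have hexp := (Real.continuous_exp.tendsto (L i2)).comp hlim
        have hbleq : bl (eS (Sum.inr i2)) = Real.exp (L i2) := by
          rw [hbl]
          have h1 : ¬ ((eS (Sum.inr i2)):ℕ) < h := by omega
          have h2 : ((eS (Sum.inr i2)):ℕ) - h < q := by omega
          simp only [dif_neg h1, dif_pos h2]
          congr 1
          apply congrArg
          apply Fin.ext
          simp [hv]
        rw [hbleq]
        refine hexp.congr fun k => ?_
        simp only [Function.comp]
        rw [heq k]
      · have hlim := hbot i2 (by omega)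
        have hexp := Real.tendsto_exp_atBot.comp hlim
        have hbleq : bl (eS (Sum.inr i2)) = 0 := by
          rw [hbl]
          have h1 : ¬ ((eS (Sum.inr i2)):ℕ) < h := by omega
          have h2 : ¬ (((eS (Sum.inr i2)):ℕ) - h < q) := by omega
          simp only [dif_neg h1, dif_neg h2]
        rw [hbleq]
        refine hexp.congr fun k => ?_
        simp only [Function.comp]
        rw [heq k]
  · -- the chain inequalities
    intro M
    have hev : ∀ᶠ k in atTop, ∀ i1 i2 : Fin m,
        ((i2:ℕ) = (i1:ℕ)+1 ∧ q ≤ (i1:ℕ)) →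
        E (fun j => t j (φ k)) i2 < (M:ℝ) * E (fun j => t j (φ k)) i1 := by
      rw [eventually_all]
      intro i1
      rw [eventually_all]
      intro i2
      by_cases hc : (i2:ℕ) = (i1:ℕ)+1 ∧ q ≤ (i1:ℕ)
      · exact (hchain (M:ℝ) i1 i2 hc.1 hc.2).mono fun k hk _ => hk
      · exact Eventually.of_forall fun k hk => absurd hk hc
    obtain ⟨N, hN⟩ := eventually_atTop.1 hev
    refine ⟨N, fun k hk i j hji hgi => ?_⟩
    have him : (i:ℕ) - h < m := by omega
    have hjm : (j:ℕ) - h < m := by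
      have := j.isLt
      omega
    set i2 : Fin m := ⟨(i:ℕ) - h, him⟩ with hi2
    set j2 : Fin m := ⟨(j:ℕ) - h, hjm⟩ with hj2
    have hieq : i = eS (Sum.inr i2) := by
      have hvv : ((eS (Sum.inr i2)):ℕ) = (i:ℕ) := by rw [hvalr]; simp [hi2]; omega
      exact (Fin.ext hvv).symm
    have hjeq : j = eS (Sum.inr j2) := by
      have hvv : ((eS (Sum.inr j2)):ℕ) = (j:ℕ) := by rw [hvalr]; simp [hj2]; omega
      exact (Fin.ext hvv).symm
    rw [hieq, hjeq, hrow_tail i2 (fun l => Real.log (a (φ k) l)),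
      hrow_tail j2 (fun l => Real.log (a (φ k) l))]
    rw [Real.rpow_def_of_pos (Real.exp_pos _), Real.log_exp]
    apply Real.exp_lt_exp.2
    have hkey := hN k (le_of_lt hk) i2 j2 ⟨by simp [hi2, hj2]; omega, by simp [hi2]; omega⟩
    calc E (fun j2 => t j2 (φ k)) j2 < (M:ℝ) * E (fun j2 => t j2 (φ k)) i2 := hkey
      _ = E (fun j2 => t j2 (φ k)) i2 * (M:ℝ) := by ring
end

section
/- For a sequence x(k) in ℝⁿ converging to a point y, there exists a flag (V₀,…,V_h) of subspaces of ℝⁿ (V₀ ⊂ V₁ ⊂ ⋯ ⊂ V_h with dim V_i = i) and a subsequence of x(k) converging to y along this flag, meaning: each x(k) − y ∈ V_h \ V_{h−1}, and for each i ∈ {0,…,h−2}, the images of x(k) − y under the canonical projection π_i: V_h \ V_i → P(V_h / V_i) converge to the point π_i(V_{i+1}). -/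
open Filter Topology

/-- The quotient topology on the projectivization of a topological vector space. -/
noncomputable instance projTopology {K V : Type*} [DivisionRing K] [AddCommGroup V]
    [Module K V] [TopologicalSpace V] : TopologicalSpace (Projectivization K V) := by
  unfold Projectivization
  infer_instance

lemma flag_core {n : ℕ} : ∀ (c : ℕ) (V : Submodule ℝ (Fin n → ℝ)) (v : ℕ → Fin n → ℝ),
    Module.finrank ℝ (Fin n → ℝ) ≤ Module.finrank ℝ V + c →
    ∃ (m : ℕ) (W : ℕ → Submodule ℝ (Fin n → ℝ)) (φ : ℕ → ℕ),
      StrictMono φ ∧ m ≤ c ∧ W 0 = V ∧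
      (∀ j ≤ m, Module.finrank ℝ (W j) = Module.finrank ℝ V + j) ∧
      (∀ j < m, W j < W (j+1)) ∧
      (∀ k, v (φ k) ∈ W m) ∧
      (m = 0 ∨ ∀ k, v (φ k) ∉ W (m-1)) ∧
      (∀ j, j + 1 ≤ m → ∃ (u : Fin n → ℝ) (_ : u ∈ W (j+1))
        (hu2 : Submodule.mkQ (W j) u ≠ 0),
        ∀ hq : ∀ k, Submodule.mkQ (W j) (v (φ k)) ≠ 0,
          Tendsto (fun k => Projectivization.mk ℝ (Submodule.mkQ (W j) (v (φ k))) (hq k))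
            atTop (𝓝 (Projectivization.mk ℝ (Submodule.mkQ (W j) u) hu2))) := by
  intro c
  induction c with
  | zero =>
    intro V v hrk
    have hV : V = ⊤ := Submodule.eq_top_of_finrank_eq
      (le_antisymm (Submodule.finrank_le V) (by simpa using hrk))
    refine ⟨0, fun _ => V, id, strictMono_id, le_refl 0, rfl, ?_, ?_, ?_, Or.inl rfl, ?_⟩
    · intro j hj; interval_cases j; simp
    · omega
    · intro k; rw [hV]; trivial
    · omega
  | succ c ih =>
    intro V v hrk
    by_cases hinf : {k | v k ∈ V}.Infinite
    · refine ⟨0, fun _ => V, Nat.nth (fun k => v k ∈ V), Nat.nth_strictMono hinf,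
        Nat.zero_le _, rfl, ?_, ?_, ?_, Or.inl rfl, ?_⟩
      · intro j hj; interval_cases j; simp
      · omega
      · intro k; exact Nat.nth_mem_of_infinite hinf k
      · omega
    · -- the set {k | v k ∈ V} is finite
      have hfin : {k | v k ∈ V}.Finite := Set.not_infinite.mp hinf
      obtain ⟨N, hN⟩ : ∃ N, ∀ k, N ≤ k → v k ∉ V := by
        obtain ⟨B, hB⟩ := hfin.bddAbove
        exact ⟨B + 1, fun k hk hmem => by have := hB hmem; omega⟩
      set v' : ℕ → Fin n → ℝ := fun k => v (k + N) with hv'def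
      have hv' : ∀ k, v' k ∉ V := fun k => hN _ (Nat.le_add_left N k)
      obtain ⟨C, hC⟩ := Submodule.exists_isCompl V
      set π : (Fin n → ℝ) →ₗ[ℝ] (Fin n → ℝ) :=
        C.subtype ∘ₗ (Submodule.linearProjOfIsCompl C V hC.symm) with hπdef
      have hπC : ∀ x, π x ∈ C := fun x => Submodule.coe_mem _
      have hπV : ∀ x, x - π x ∈ V := by
        intro x
        have h := Submodule.projection_add_projection_eq_self hC x
        have h2 : x - π x = ↑(Submodule.linearProjOfIsCompl V C hC x) := by
          simp only [hπdef, LinearMap.coe_comp, Function.comp_apply, Submodule.coe_subtype]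
          exact (eq_sub_of_add_eq h).symm
        rw [h2]; exact Submodule.coe_mem _
      have hπ0 : ∀ x, x ∉ V → π x ≠ 0 := by
        intro x hx h0
        apply hx
        have := hπV x
        rwa [h0, sub_zero] at this
      set u : ℕ → (Fin n → ℝ) := fun k => ‖π (v' k)‖⁻¹ • π (v' k) with hudef
      have hw0 : ∀ k, π (v' k) ≠ 0 := fun k => hπ0 _ (hv' k)
      have husphere : ∀ k, u k ∈ Metric.sphere (0 : Fin n → ℝ) 1 := by
        intro k
        rw [mem_sphere_zero_iff_norm, hudef]
        simp only [norm_smul, norm_inv, norm_norm]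
        exact inv_mul_cancel₀ (norm_ne_zero_iff.mpr (hw0 k))
      obtain ⟨z, hzs, ψ, hψ, hconv⟩ :=
        (isCompact_sphere (0 : Fin n → ℝ) 1).tendsto_subseq husphere
      have hz1 : ‖z‖ = 1 := mem_sphere_zero_iff_norm.mp hzs
      have hz0 : z ≠ 0 := by intro h; rw [h] at hz1; simp at hz1
      have huC : ∀ k, u k ∈ C := fun k => Submodule.smul_mem _ _ (hπC _)
      have hzC : z ∈ C :=
        (Submodule.closed_of_finiteDimensional C).mem_of_tendsto hconv
          (Eventually.of_forall (fun k => huC _))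
      have hzV : z ∉ V := fun h =>
        hz0 (Submodule.disjoint_def.mp hC.disjoint z h hzC)
      set V' := V ⊔ (ℝ ∙ z) with hV'def
      have hVV' : V ≤ V' := le_sup_left
      have hzV' : z ∈ V' := Submodule.mem_sup_right (Submodule.mem_span_singleton_self z)
      have hfrV' : Module.finrank ℝ V' = Module.finrank ℝ V + 1 := by
        have hdisj : V ⊓ (ℝ ∙ z) = ⊥ :=
          disjoint_iff.mp ((Submodule.disjoint_span_singleton' hz0).mpr hzV)
        have h := Submodule.finrank_sup_add_finrank_inf_eq V (ℝ ∙ z)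
        rw [hdisj, finrank_span_singleton hz0] at h
        simpa using h
      obtain ⟨m', W', φ', hφ', hm'c, hW'0, hfr', hchain', hmem', hnot', hconv'⟩ :=
        ih V' (fun k => v' (ψ k)) (by rw [hfrV']; omega)
      refine ⟨m' + 1, fun j => Nat.casesOn j V W', fun k => ψ (φ' k) + N,
        ?_, by omega, rfl, ?_, ?_, ?_, ?_, ?_⟩
      · intro a b hab
        show ψ (φ' a) + N < ψ (φ' b) + N
        have := hψ (hφ' hab); omega
      · intro j hj
        cases j with
        | zero => simp
        | succ i =>
          show Module.finrank ℝ (W' i) = _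
          rw [hfr' i (by omega), hfrV']; omega
      · intro j hj
        cases j with
        | zero =>
          show V < W' 0
          rw [hW'0]
          exact lt_of_le_of_ne hVV' (fun h => hzV (by rw [h]; exact hzV'))
        | succ i => exact hchain' i (by omega)
      · intro k; exact hmem' k
      · refine Or.inr fun k => ?_
        cases m' with
        | zero => exact hv' _
        | succ i =>
          rcases hnot' with h0 | hnot'
          · exact absurd h0 (Nat.succ_ne_zero i)
          · exact hnot' k
      · intro j hj
        cases j with
        | succ i => exact hconv' i (by omega)
        | zero =>
          have hzq : Submodule.mkQ V z ≠ 0 := by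
            rw [Ne, Submodule.mkQ_apply, Submodule.Quotient.mk_eq_zero]; exact hzV
          refine ⟨z, ?_, hzq, ?_⟩
          · show z ∈ W' 0
            rw [hW'0]; exact hzV'
          intro hq
          have huq : ∀ j, Submodule.mkQ V (u j) ≠ 0 := by
            intro j
            rw [Ne, Submodule.mkQ_apply, Submodule.Quotient.mk_eq_zero]
            intro hmem
            have hzero := Submodule.disjoint_def.mp hC.disjoint (u j) hmem (huC j)
            have h1 := mem_sphere_zero_iff_norm.mp (husphere j)
            rw [hzero] at h1
            simp at h1
          have hhom : Tendsto (fun k : ℕ => u (ψ (φ' k))) atTop (𝓝 z) :=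
            hconv.comp (hφ'.tendsto_atTop)
          have hcontq : Continuous (Submodule.mkQ V) := continuous_quot_mk
          have hqt : Tendsto (fun k : ℕ => Submodule.mkQ V (u (ψ (φ' k)))) atTop
              (𝓝 (Submodule.mkQ V z)) := (hcontq.tendsto z).comp hhom
          have hsub : Tendsto (fun k : ℕ => (⟨Submodule.mkQ V (u (ψ (φ' k))), huq _⟩ :
              {q : (Fin n → ℝ) ⧸ V // q ≠ 0})) atTop (𝓝 ⟨Submodule.mkQ V z, hzq⟩) :=
            tendsto_subtype_rng.mpr hqt
          have hcontmk : Continuous (fun q : {q : (Fin n → ℝ) ⧸ V // q ≠ 0} =>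
              Projectivization.mk ℝ q.1 q.2) := continuous_quot_mk
          have htend2 : Tendsto
              (fun k => Projectivization.mk ℝ (Submodule.mkQ V (u (ψ (φ' k)))) (huq _))
              atTop (𝓝 (Projectivization.mk ℝ (Submodule.mkQ V z) hzq)) :=
            (hcontmk.tendsto _).comp hsub
          refine htend2.congr fun k => ?_
          rw [Projectivization.mk_eq_mk_iff]
          refine ⟨Units.mk0 (‖π (v' (ψ (φ' k)))‖⁻¹)
            (inv_ne_zero (norm_ne_zero_iff.mpr (hw0 _))), ?_⟩
          have hqeq : Submodule.mkQ V (π (v' (ψ (φ' k)))) = Submodule.mkQ V (v' (ψ (φ' k))) := by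
            rw [Submodule.mkQ_apply, Submodule.mkQ_apply, Submodule.Quotient.eq]
            simpa [neg_sub] using V.neg_mem (hπV (v' (ψ (φ' k))))
          show (Units.mk0 _ _ : ℝˣ) • Submodule.mkQ V (v (ψ (φ' k) + N)) =
            Submodule.mkQ V (u (ψ (φ' k)))
          rw [Units.smul_mk0, hudef]
          simp only [map_smul, hqeq]
          try rfl

/-- every sequence converging to y admits a subsequence converging to y
along a flag (V₀,…,V_h): x(k) − y ∈ V_h \ V_{h−1}, and for i ≤ h−2 the projective classes
of x(k) − y in P(ℝⁿ/V_i) converge to the point determined by V_{i+1}. -/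
theorem stmt13 {n : ℕ} (x : ℕ → Fin n → ℝ) (y : Fin n → ℝ)
    (hx : Tendsto x atTop (𝓝 y)) :
    ∃ (h : ℕ) (W : ℕ → Submodule ℝ (Fin n → ℝ)) (φ : ℕ → ℕ),
      StrictMono φ ∧ h ≤ n ∧
      (∀ i ≤ h, Module.finrank ℝ (W i) = i) ∧
      (∀ i < h, W i < W (i + 1)) ∧
      (∀ k, x (φ k) - y ∈ W h) ∧
      (h = 0 ∨ ∀ k, x (φ k) - y ∉ W (h - 1)) ∧
      ∀ i, i + 2 ≤ h →
        ∃ (w : (Fin n → ℝ) ⧸ W i) (hw : w ≠ 0),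
          (∃ u ∈ W (i + 1), Submodule.mkQ (W i) u = w) ∧
          ∀ hq : ∀ k, Submodule.mkQ (W i) (x (φ k) - y) ≠ 0,
            Tendsto
              (fun k => Projectivization.mk ℝ (Submodule.mkQ (W i) (x (φ k) - y)) (hq k))
              atTop (𝓝 (Projectivization.mk ℝ w hw)) := by
  obtain ⟨m, W, φ, hφ, hmn, hW0, hfr, hchain, hmem, hnot, hconv⟩ :=
    flag_core n ⊥ (fun k => x k - y)
      (by simp [Module.finrank_fin_fun, finrank_bot])
  refine ⟨m, W, φ, hφ, hmn, ?_, hchain, hmem, hnot, ?_⟩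
  · intro i hi
    rw [hfr i hi]
    simp
  · intro i hi
    obtain ⟨u, hu1, hu2, ht⟩ := hconv i (by omega)
    exact ⟨Submodule.mkQ (W i) u, hu2, ⟨u, hu1, rfl⟩, ht⟩
end

section
/- The logarithmic limit set of V = {(x,y) ∈ (ℝ_{>0})² : y = sin(1/x)} is {(x,y) ∈ ℝ² : (x ≤ 0 and y ≤ 0) or (x ≥ 0 and y = −x)}; in particular, this logarithmic limit set contains a 2-dimensional piece even though V is 1-dimensional. -/
open Filter Topology

/-- Bounds on `sin (1/x)` for `x ≥ 1`. -/
lemma sin_inv_bounds (x : ℝ) (hx : 1 ≤ x) :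
    0 < Real.sin (1/x) ∧
      Real.log (3/4) - Real.log x ≤ Real.log (Real.sin (1/x)) ∧
      Real.log (Real.sin (1/x)) ≤ -Real.log x := by
  have hx0 : (0:ℝ) < x := lt_of_lt_of_le one_pos hx
  have hu0 : 0 < 1/x := by positivity
  have hu1 : 1/x ≤ 1 := by rw [div_le_one hx0]; exact hx
  have hlow : 3/4 * (1/x) ≤ Real.sin (1/x) := by
    have h := Real.sin_gt_sub_cube hu0
    nlinarith [pow_le_pow_of_le_one hu0.le hu1 (by norm_num : 1 ≤ 3), pow_one (1/x)]
  have hsp : 0 < Real.sin (1/x) := lt_of_lt_of_le (by positivity) hlow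
  refine ⟨hsp, ?_, ?_⟩
  · calc Real.log (3/4) - Real.log x = Real.log (3/4 * (1/x)) := by
          rw [Real.log_mul (by norm_num) (by positivity),
            Real.log_div one_ne_zero hx0.ne', Real.log_one]; ring
    _ ≤ _ := Real.log_le_log (by positivity) hlow
  · calc Real.log (Real.sin (1/x)) ≤ Real.log (1/x) :=
          Real.log_le_log hsp (le_of_lt (Real.sin_lt hu0))
    _ = -Real.log x := by rw [Real.log_div one_ne_zero hx0.ne', Real.log_one]; ring

/-- `C/(k+1) → 0`. -/
lemma tendsto_const_div_add_one (C : ℝ) :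
    Tendsto (fun k : ℕ => C / ((k : ℝ) + 1)) atTop (𝓝 0) := by
  have h := (tendsto_const_div_atTop_nhds_zero_nat C).comp (tendsto_add_atTop_nat 1)
  exact h.congr fun k => by simp [Function.comp]

/-- Generic membership criterion for our curve. -/
lemma mem_logLimit_gen (p : Fin 2 → ℝ) (X : ℕ → ℝ) (hX : ∀ k, 0 < X k)
    (hsin : ∀ k, 0 < Real.sin (1 / X k))
    (h0 : Tendsto (fun k : ℕ => Real.log (X k) / ((k:ℝ)+1)) atTop (𝓝 (p 0)))
    (h1 : Tendsto (fun k : ℕ => Real.log (Real.sin (1 / X k)) / ((k:ℝ)+1)) atTop (𝓝 (p 1))) :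
    p ∈ logLimit {q : Fin 2 → ℝ | 0 < q 0 ∧ 0 < q 1 ∧ q 1 = Real.sin (1 / q 0)} := by
  refine ⟨fun k => ![X k, Real.sin (1 / X k)], fun k => Real.exp (-((k:ℝ) + 1)), ?_, ?_, ?_, ?_⟩
  · intro k
    exact ⟨hX k, hsin k, by simp⟩
  · intro k
    refine ⟨Real.exp_pos _, Real.exp_lt_one_iff.2 ?_⟩
    have : (0:ℝ) < (k:ℝ) + 1 := by positivity
    linarith
  · refine Real.tendsto_exp_atBot.comp ?_
    exact tendsto_neg_atTop_atBot.comp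
      (tendsto_atTop_add_const_right _ 1 tendsto_natCast_atTop_atTop)
  · rw [tendsto_pi_nhds]
    have key : ∀ (k : ℕ) (L : ℝ),
        (-1 / Real.log (Real.exp (-((k:ℝ) + 1)))) * L = L / ((k:ℝ)+1) := by
      intro k L
      rw [Real.log_exp]
      have h : (-1:ℝ)/(-(((k:ℝ))+1)) = 1/(((k:ℝ))+1) := neg_div_neg_eq 1 _
      rw [h, one_div, inv_mul_eq_div]
    intro i
    fin_cases i
    · simpa only [Fin.zero_eta, Matrix.cons_val_zero, key] using h0
    · simpa only [Fin.mk_one, Matrix.cons_val_one, Matrix.head_cons, Matrix.cons_val_zero, key] using h1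

/-- Part 1 of ⊇ : `a ≤ 0`, `b ≤ 0`. -/
lemma aux1 (p : Fin 2 → ℝ) (ha : p 0 ≤ 0) (hb : p 1 ≤ 0) :
    p ∈ logLimit {q : Fin 2 → ℝ | 0 < q 0 ∧ 0 < q 1 ∧ q 1 = Real.sin (1 / q 0)} := by
  have hknn : ∀ k : ℕ, (0:ℝ) < (k:ℝ) + 1 := fun k => by positivity
  -- the sine value and the angle
  set c : ℕ → ℝ := fun k => Real.exp (p 1 * ((k : ℝ) + 1)) with hc_def
  set u : ℕ → ℝ := fun k =>
    Real.arcsin (c k) + (⌈Real.exp (-(p 0) * ((k : ℝ) + 1))⌉₊ : ℝ) * (2 * Real.pi) with hu_def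
  have hc0 : ∀ k, 0 < c k := fun k => Real.exp_pos _
  have hc1 : ∀ k, c k ≤ 1 := fun k => Real.exp_le_one_iff.2 (by nlinarith [hknn k])
  have harc0 : ∀ k, 0 < Real.arcsin (c k) := fun k => Real.arcsin_pos.2 (hc0 k)
  have harc1 : ∀ k, Real.arcsin (c k) ≤ 2 := fun k =>
    le_trans (Real.arcsin_le_pi_div_two _) (by nlinarith [Real.pi_lt_d2])
  have hek : ∀ k : ℕ, (1:ℝ) ≤ Real.exp (-(p 0) * ((k : ℝ) + 1)) := fun k =>
    Real.one_le_exp (by nlinarith [hknn k])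
  have hm_lb : ∀ k : ℕ, Real.exp (-(p 0) * ((k : ℝ) + 1))
      ≤ (⌈Real.exp (-(p 0) * ((k : ℝ) + 1))⌉₊ : ℝ) := fun k => Nat.le_ceil _
  have hm_ub : ∀ k : ℕ, (⌈Real.exp (-(p 0) * ((k : ℝ) + 1))⌉₊ : ℝ)
      ≤ Real.exp (-(p 0) * ((k : ℝ) + 1)) + 1 := fun k =>
    (Nat.ceil_lt_add_one (Real.exp_pos _).le).le
  have hu_lb : ∀ k : ℕ, Real.exp (-(p 0) * ((k : ℝ) + 1)) ≤ u k := by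
    intro k
    simp only [hu_def]
    nlinarith [hm_lb k, harc0 k, Real.pi_gt_three, Real.exp_pos (-(p 0) * ((k : ℝ) + 1))]
  have hu_ub : ∀ k, u k ≤ 16 * Real.exp (-(p 0) * ((k : ℝ) + 1)) := by
    intro k
    simp only [hu_def]
    nlinarith [hm_ub k, harc1 k, hek k, Real.pi_lt_d2,
      Nat.cast_nonneg (α := ℝ) ⌈Real.exp (-(p 0) * ((k : ℝ) + 1))⌉₊]
  have hu0 : ∀ k, 0 < u k := fun k => lt_of_lt_of_le (Real.exp_pos _) (hu_lb k)
  have hsinu : ∀ k, Real.sin (u k) = c k := by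
    intro k
    simp only [hu_def]
    rw [Real.sin_add_nat_mul_two_pi]
    exact Real.sin_arcsin (by linarith [hc0 k]) (hc1 k)
  refine mem_logLimit_gen p (fun k => 1 / u k) (fun k => by have := hu0 k; positivity) ?_ ?_ ?_
  · intro k
    rw [one_div_one_div, hsinu k]
    exact hc0 k
  · -- coordinate 0
    have hlog : ∀ k, Real.log (1 / u k) = -(Real.log (u k)) := by
      intro k
      rw [Real.log_div one_ne_zero (hu0 k).ne', Real.log_one]
      ring
    have hlog_lb : ∀ k : ℕ, -(p 0) * ((k:ℝ)+1) ≤ Real.log (u k) := by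
      intro k
      calc -(p 0) * ((k:ℝ)+1) = Real.log (Real.exp (-(p 0) * ((k:ℝ)+1))) :=
            (Real.log_exp _).symm
      _ ≤ _ := Real.log_le_log (Real.exp_pos _) (hu_lb k)
    have hlog_ub : ∀ k : ℕ, Real.log (u k) ≤ Real.log 16 + -(p 0) * ((k:ℝ)+1) := by
      intro k
      calc Real.log (u k) ≤ Real.log (16 * Real.exp (-(p 0) * ((k:ℝ)+1))) :=
            Real.log_le_log (hu0 k) (hu_ub k)
      _ = _ := by rw [Real.log_mul (by norm_num) (Real.exp_pos _).ne', Real.log_exp]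
    have hlower : Tendsto (fun k : ℕ => p 0 - Real.log 16 / ((k:ℝ)+1)) atTop (𝓝 (p 0)) := by
      have := (tendsto_const_nhds : Tendsto (fun _ : ℕ => p 0) atTop (𝓝 (p 0))).sub
        (tendsto_const_div_add_one (Real.log 16))
      simpa using this
    have hmid : Tendsto (fun k : ℕ => -(Real.log (u k)) / ((k:ℝ)+1)) atTop (𝓝 (p 0)) := by
      refine tendsto_of_tendsto_of_tendsto_of_le_of_le hlower
        (tendsto_const_nhds : Tendsto (fun _ : ℕ => p 0) atTop (𝓝 (p 0)))
        (fun k => ?_) (fun k => ?_)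
      · rw [sub_le_iff_le_add, ← add_div, le_div_iff₀ (hknn k)]
        linarith [hlog_ub k]
      · rw [div_le_iff₀ (hknn k)]
        linarith [hlog_lb k]
    exact hmid.congr fun k => by rw [hlog k]
  · -- coordinate 1
    refine tendsto_const_nhds.congr fun k => ?_
    rw [one_div_one_div, hsinu k]
    simp only [hc_def, Real.log_exp]
    field_simp

/-- Part 2 of ⊇ : `a ≥ 0`, `b = -a`. -/
lemma aux2 (p : Fin 2 → ℝ) (ha : 0 ≤ p 0) (hb : p 1 = -(p 0)) :
    p ∈ logLimit {q : Fin 2 → ℝ | 0 < q 0 ∧ 0 < q 1 ∧ q 1 = Real.sin (1 / q 0)} := by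
  have hknn : ∀ k : ℕ, (0:ℝ) < (k:ℝ) + 1 := fun k => by positivity
  have hX1 : ∀ k : ℕ, (1:ℝ) ≤ Real.exp (p 0 * ((k:ℝ)+1)) := fun k =>
    Real.one_le_exp (by nlinarith [hknn k])
  refine mem_logLimit_gen p (fun k => Real.exp (p 0 * ((k:ℝ)+1)))
    (fun k => Real.exp_pos _) (fun k => (sin_inv_bounds _ (hX1 k)).1) ?_ ?_
  · refine tendsto_const_nhds.congr fun k => ?_
    rw [Real.log_exp]
    field_simp
  · -- squeeze for coordinate 1, target p 1 = -(p 0)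
    obtain ⟨hlower, hupper⟩ : (∀ k : ℕ, Real.log (3/4) / ((k:ℝ)+1) + -(p 0)
        ≤ Real.log (Real.sin (1 / Real.exp (p 0 * ((k:ℝ)+1)))) / ((k:ℝ)+1)) ∧
        (∀ k : ℕ, Real.log (Real.sin (1 / Real.exp (p 0 * ((k:ℝ)+1)))) / ((k:ℝ)+1)
        ≤ -(p 0)) := by
      constructor <;> intro k <;>
        obtain ⟨-, hlo, hhi⟩ := sin_inv_bounds _ (hX1 k)
      · rw [Real.log_exp] at hlo
        rw [div_add' _ _ _ (hknn k).ne', div_le_div_iff₀ (hknn k) (hknn k)]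
        nlinarith [hknn k]
      · rw [Real.log_exp] at hhi
        rw [div_le_iff₀ (hknn k)]
        nlinarith [hknn k]
    have hlowlim : Tendsto (fun k : ℕ => Real.log (3/4) / ((k:ℝ)+1) + -(p 0))
        atTop (𝓝 (p 1)) := by
      rw [hb]
      have := (tendsto_const_div_add_one (Real.log (3/4))).add
        (tendsto_const_nhds : Tendsto (fun _ : ℕ => -(p 0)) atTop (𝓝 (-(p 0))))
      simpa using this
    have huplim : Tendsto (fun _ : ℕ => -(p 0)) atTop (𝓝 (p 1)) := by
      rw [hb]; exact tendsto_const_nhds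
    exact tendsto_of_tendsto_of_tendsto_of_le_of_le hlowlim huplim hlower hupper

/-- the logarithmic limit set of {(x, sin(1/x)) : x > 0, sin(1/x) > 0} is
{x ≤ 0 and y ≤ 0} ∪ {x ≥ 0 and y = −x}; in particular it is 2-dimensional although the
set is a curve. -/
theorem stmt15 :
    logLimit {p : Fin 2 → ℝ | 0 < p 0 ∧ 0 < p 1 ∧ p 1 = Real.sin (1 / p 0)} =
      {p : Fin 2 → ℝ | (p 0 ≤ 0 ∧ p 1 ≤ 0) ∨ (0 ≤ p 0 ∧ p 1 = -(p 0))} := by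
  ext p
  constructor
  · rintro ⟨x, t, hxV, ht, ht0, hF⟩
    set s : ℕ → ℝ := fun k => -1 / Real.log (t k) with hs_def
    have hs_pos : ∀ k, 0 < s k := fun k =>
      div_pos_of_neg_of_neg (by norm_num) (Real.log_neg (ht k).1 (ht k).2)
    have hF' : ∀ i, Tendsto (fun k => s k * Real.log (x k i)) atTop (𝓝 (p i)) :=
      fun i => (tendsto_pi_nhds.mp hF) i
    have hF0 := hF' 0
    have hF1 := hF' 1
    have hb_le : p 1 ≤ 0 := by
      refine le_of_tendsto hF1 (Eventually.of_forall fun k => ?_)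
      have h1 : x k 1 ≤ 1 := by
        rw [(hxV k).2.2]; exact Real.sin_le_one _
      exact mul_nonpos_of_nonneg_of_nonpos (hs_pos k).le
        (Real.log_nonpos (hxV k).2.1.le h1)
    rcases le_or_gt (p 0) 0 with ha | ha
    · exact Or.inl ⟨ha, hb_le⟩
    · refine Or.inr ⟨ha.le, ?_⟩
      have hL : Tendsto (fun k => Real.log (t k)) atTop atBot :=
        Real.tendsto_log_nhdsGT_zero.comp
          (tendsto_nhdsWithin_of_tendsto_nhds_of_eventually_within _ ht0
            (Eventually.of_forall fun k => (ht k).1))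
      have hs0 : Tendsto s atTop (𝓝 0) := by
        have h := tendsto_inv_atTop_zero.comp (tendsto_neg_atBot_atTop.comp hL)
        refine h.congr fun k => ?_
        simp [hs_def, Function.comp, neg_div, one_div, inv_neg]
      have hsinv : Tendsto (fun k => (s k)⁻¹) atTop atTop :=
        tendsto_inv_nhdsGT_zero.comp
          (tendsto_nhdsWithin_of_tendsto_nhds_of_eventually_within _ hs0
            (Eventually.of_forall fun k => hs_pos k))
      have hlogx : Tendsto (fun k => Real.log (x k 0)) atTop atTop := by
        refine (Filter.Tendsto.pos_mul_atTop ha hF0 hsinv).congr fun k => ?_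
        rw [mul_comm (s k), mul_assoc, mul_inv_cancel₀ (hs_pos k).ne', mul_one]
      have hxlarge : ∀ᶠ k in atTop, 1 ≤ x k 0 := by
        filter_upwards [hlogx.eventually_ge_atTop 1] with k hk
        by_contra h
        push_neg at h
        have := Real.log_nonpos (hxV k).1.le h.le
        linarith
      have hbound : ∀ᶠ k in atTop,
          (-(s k * Real.log (x k 0)) + s k * Real.log (3/4) ≤ s k * Real.log (x k 1) ∧
          s k * Real.log (x k 1) ≤ -(s k * Real.log (x k 0))) := by
        filter_upwards [hxlarge] with k hk
        obtain ⟨-, hlo, hhi⟩ := sin_inv_bounds (x k 0) hk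
        rw [← (hxV k).2.2] at hlo hhi
        have h1 := mul_le_mul_of_nonneg_left hlo (hs_pos k).le
        have h2 := mul_le_mul_of_nonneg_left hhi (hs_pos k).le
        rw [mul_sub] at h1
        rw [mul_neg] at h2
        exact ⟨by linarith, by linarith⟩
      have hlow : Tendsto (fun k => -(s k * Real.log (x k 0)) + s k * Real.log (3/4))
          atTop (𝓝 (-(p 0))) := by
        have h := hF0.neg.add (hs0.mul_const (Real.log (3/4)))
        rw [zero_mul, add_zero] at h
        exact h
      have hsq : Tendsto (fun k => s k * Real.log (x k 1)) atTop (𝓝 (-(p 0))) :=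
        tendsto_of_tendsto_of_tendsto_of_le_of_le' hlow hF0.neg
          (hbound.mono fun k h => h.1) (hbound.mono fun k h => h.2)
      exact tendsto_nhds_unique hF1 hsq
  · rintro (⟨ha, hb⟩ | ⟨ha, hb⟩)
    · exact aux1 p ha hb
    · exact aux2 p ha hb
end
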